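/- (Melchior's inequality) Let L be an arrangement of d ≥ 3 lines in the real projective plane with t_d(L) = 0 (i.e. the lines are not all concurrent). Then t_2(L) ≥ 3 + Σ_{r=4}^{d−1} (r − 3)·t_r(L). -/

import Mathlib

/-- A line of the real projective plane `ℙ²(ℝ)`, viewed as a 2-dimensional
linear subspace of `ℝ³`. -/
def IsProjLine (ℓ : Submodule ℝ (Fin 3 → ℝ)) : Prop :=
  Module.finrank ℝ ℓ = 2

/-- A point of the real projective plane `ℙ²(ℝ)`, viewed as a 1-dimensional
linear subspace of `ℝ³`.  A point `p` lies on a line `ℓ` if `p ≤ ℓ`. -/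
def IsProjPoint (p : Submodule ℝ (Fin 3 → ℝ)) : Prop :=
  Module.finrank ℝ p = 1

/-- The multiplicity of `p`: the number of lines of the arrangement `L`
passing through `p`. -/
noncomputable def multPt (L : Finset (Submodule ℝ (Fin 3 → ℝ)))
    (p : Submodule ℝ (Fin 3 → ℝ)) : ℕ :=
  {ℓ : Submodule ℝ (Fin 3 → ℝ) | ℓ ∈ L ∧ p ≤ ℓ}.ncard

/-- `tr L r`: the number of points of `ℙ²(ℝ)` lying on exactly `r` lines
of the arrangement `L`. -/
noncomputable def tr (L : Finset (Submodule ℝ (Fin 3 → ℝ))) (r : ℕ) : ℕ :=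
  {p : Submodule ℝ (Fin 3 → ℝ) | IsProjPoint p ∧ multPt L p = r}.ncard

abbrev V3 := Fin 3 → ℝ

open Module Submodule Finset
open scoped Classical
noncomputable section

lemma finrank_V3 : Module.finrank ℝ V3 = 3 := by
  simp [Module.finrank_pi]

noncomputable def phi (ℓ : Submodule ℝ V3) : V3 →ₗ[ℝ] ℝ :=
  if h : Nonempty ((V3 ⧸ ℓ) ≃ₗ[ℝ] ℝ) then
    ((Classical.choice h).toLinearMap).comp ℓ.mkQ else 0

lemma ker_phi {ℓ : Submodule ℝ V3} (hℓ : IsProjLine ℓ) :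
    LinearMap.ker (phi ℓ) = ℓ := by
  have h1 : Module.finrank ℝ (V3 ⧸ ℓ) = 1 := by
    have h2 := Submodule.finrank_quotient_add_finrank ℓ
    rw [finrank_V3] at h2
    have hℓ' : Module.finrank ℝ ℓ = 2 := hℓ
    omega
  have h : Nonempty ((V3 ⧸ ℓ) ≃ₗ[ℝ] ℝ) :=
    FiniteDimensional.nonempty_linearEquiv_of_finrank_eq (by simp [h1])
  rw [phi, dif_pos h, LinearMap.ker_comp, (Classical.choice h).ker, Submodule.comap_bot,
    Submodule.ker_mkQ]

lemma mem_iff_phi {ℓ : Submodule ℝ V3} (hℓ : IsProjLine ℓ) {x : V3} :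
    x ∈ ℓ ↔ phi ℓ x = 0 := by
  conv_lhs => rw [← ker_phi hℓ]
  exact LinearMap.mem_ker

lemma phi_ne_zero {ℓ : Submodule ℝ V3} (hℓ : IsProjLine ℓ) : phi ℓ ≠ 0 := by
  intro h
  have h2 : LinearMap.ker (phi ℓ) = ⊤ := by rw [h]; exact LinearMap.ker_zero
  rw [ker_phi hℓ] at h2
  have h3 : Module.finrank ℝ ℓ = 3 := by rw [h2, finrank_top]; exact finrank_V3
  have hℓ' : Module.finrank ℝ ℓ = 2 := hℓ; omega

lemma exists_phi_pos {ℓ : Submodule ℝ V3} (hℓ : IsProjLine ℓ) : ∃ x, 0 < phi ℓ x := by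
  obtain ⟨x, hx⟩ : ∃ x, phi ℓ x ≠ 0 := by
    by_contra h
    push_neg at h
    exact phi_ne_zero hℓ (by ext y; simp [h])
  rcases lt_or_gt_of_ne hx with h | h
  · exact ⟨-x, by simpa using by linarith⟩
  · exact ⟨x, h⟩

/-- distinct projective lines intersect in rank-1 subspace -/
lemma finrank_inf_eq_one {a b : Submodule ℝ V3} (ha : IsProjLine a) (hb : IsProjLine b)
    (hab : a ≠ b) : Module.finrank ℝ ↥(a ⊓ b) = 1 := by
  have hsum := Submodule.finrank_sup_add_finrank_inf_eq a b
  have ha' : Module.finrank ℝ a = 2 := ha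
  have hb' : Module.finrank ℝ b = 2 := hb
  have hle : Module.finrank ℝ ↥(a ⊔ b) ≤ 3 := by
    have h4 := Submodule.finrank_le (a ⊔ b)
    rwa [finrank_V3] at h4
  have hlt : a < a ⊔ b := by
    rcases lt_or_eq_of_le (le_sup_left : a ≤ a ⊔ b) with h | h
    · exact h
    · exfalso
      have hba : b ≤ a := by rw [h]; exact le_sup_right
      exact hab (Submodule.eq_of_le_of_finrank_le hba (by omega)).symm
  have h5 := Submodule.finrank_lt_finrank_of_lt hlt
  omega

/-! ### Sign arithmetic helpers -/

lemma samesign_add_of_lt {a b : ℝ} (h : |b| < |a|) : 0 < (a + b) * a := by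
  rcases abs_cases a with ⟨h1, _⟩ | ⟨h1, _⟩ <;> rcases abs_cases b with ⟨h2, _⟩ | ⟨h2, _⟩ <;>
    nlinarith

lemma samesign_comb {a b : ℝ} {t : ℝ} (hab : 0 < a * b) (h0 : 0 ≤ t) (h1 : t ≤ 1) :
    0 < ((1 - t) * a + t * b) * a := by
  have ha : a ≠ 0 := by rintro rfl; simp at hab
  rcases lt_or_eq_of_le h1 with h | h
  · nlinarith [mul_pos (sub_pos.mpr h) (mul_self_pos.mpr ha), mul_nonneg h0 hab.le]
  · subst h; simpa [mul_comm] using hab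

lemma pos_of_samesign {a b : ℝ} (h : 0 < a * b) (hb : 0 < b) : 0 < a := by
  nlinarith [mul_pos_iff.mp h]

lemma neg_of_samesign {a b : ℝ} (h : 0 < a * b) (hb : b < 0) : a < 0 := by
  nlinarith [mul_pos_iff.mp h]

/-! ### Perturbation lemma -/

lemma perturb (F : Finset (Submodule ℝ V3)) (x v : V3)
    (hx : ∀ h ∈ F, phi h x ≠ 0) :
    ∃ δ : ℝ, 0 < δ ∧ ∀ t : ℝ, 0 < t → t ≤ δ → ∀ h ∈ F, 0 < phi h (x + t • v) * phi h x := by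
  classical
  induction F using Finset.induction_on with
  | empty => exact ⟨1, one_pos, fun t _ _ h hh => absurd hh (Finset.notMem_empty h)⟩
  | insert _ _ hnotmem _ =>
    rename_i g F ih
    obtain ⟨δ, hδ, hδ'⟩ := ih (fun h hh => hx h (Finset.mem_insert_of_mem hh))
    have hgx : phi g x ≠ 0 := hx g (Finset.mem_insert_self g F)
    set c := |phi g x| / (2 * (|phi g v| + 1)) with hc
    have hcpos : 0 < c := by
      apply div_pos (abs_pos.mpr hgx); positivity
    refine ⟨min δ c, lt_min hδ hcpos, fun t ht htle h hh => ?_⟩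
    rcases Finset.mem_insert.mp hh with rfl | hh
    · have h1 : phi h (x + t • v) = phi h x + t * phi h v := by
        simp [map_add, map_smul, smul_eq_mul]
      rw [h1]
      apply samesign_add_of_lt
      have h2 : |t * phi h v| = t * |phi h v| := by
        rw [abs_mul, abs_of_pos ht]
      rw [h2]
      have h3 : t ≤ c := le_trans htle (min_le_right _ _)
      have h4 : 0 < |phi h x| := abs_pos.mpr hgx
      have h5 : 0 < 2 * (|phi h v| + 1) := by positivity
      calc t * |phi h v| ≤ c * |phi h v| := by
            apply mul_le_mul_of_nonneg_right h3 (abs_nonneg _)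
        _ < |phi h x| := by
            rw [hc, div_mul_eq_mul_div, div_lt_iff₀ h5]
            nlinarith [abs_nonneg (phi h v)]
    · exact hδ' t ht (le_trans htle (min_le_left _ _)) h hh

/-! ### Crossing lemma -/

lemma crossing (F : Finset (Submodule ℝ V3)) (ψ : Submodule ℝ V3) (x y : V3)
    (hsame : ∀ h ∈ F, 0 < phi h x * phi h y)
    (hopp : phi ψ x * phi ψ y < 0) :
    ∃ z : V3, phi ψ z = 0 ∧ (∀ h ∈ F, 0 < phi h z * phi h x) ∧
      ∃ t : ℝ, 0 < t ∧ t < 1 ∧ z = x + t • (y - x) := by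
  set a := phi ψ x with ha
  set b := phi ψ y with hb
  have hab : a - b ≠ 0 := by
    intro h
    have : a = b := by linarith
    rw [this] at hopp; nlinarith
  set t := a / (a - b) with ht
  have h0 : 0 < t ∧ t < 1 := by
    rcases mul_neg_iff.mp hopp with ⟨h1, h2⟩ | ⟨h1, h2⟩
    · constructor
      · apply div_pos h1; linarith
      · rw [div_lt_one (by linarith)]; linarith
    · constructor
      · exact div_pos_of_neg_of_neg h1 (by linarith)
      · have h3 : a - b < 0 := by linarith
        rw [ht, div_lt_one_of_neg h3]; linarith
  refine ⟨x + t • (y - x), ?_, fun h hh => ?_, t, h0.1, h0.2, rfl⟩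
  · have : phi ψ (x + t • (y - x)) = a + t * (b - a) := by
      simp [map_add, map_smul, map_sub, smul_eq_mul]; try ring
    rw [this, ht]
    field_simp
    ring
  · have hcalc : phi h (x + t • (y - x)) = (1 - t) * phi h x + t * phi h y := by
      simp [map_add, map_smul, map_sub, smul_eq_mul]; try ring
    rw [hcalc]
    exact samesign_comb (hsame h hh) (le_of_lt h0.1) (le_of_lt h0.2)

/-! ### Avoidance lemma -/

lemma avoid (U : Set V3) (hU : IsOpen U) (hne : U.Nonempty)
    (T : Finset (Submodule ℝ V3)) (hT : ∀ p ∈ T, p ≠ ⊤) :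
    ∃ y ∈ U, ∀ p ∈ T, y ∉ p := by
  classical
  induction T using Finset.induction_on generalizing U with
  | empty => obtain ⟨y, hy⟩ := hne; exact ⟨y, hy, by simp⟩
  | insert _ _ hnotmem _ =>
    rename_i p T ih
    have hp : p ≠ ⊤ := hT p (Finset.mem_insert_self p T)
    have hclosed : IsClosed (p : Set V3) := Submodule.closed_of_finiteDimensional p
    have hU' : IsOpen (U \ p) := hU.sdiff hclosed
    have hne' : (U \ ↑p).Nonempty := by
      by_contra h
      rw [Set.not_nonempty_iff_eq_empty, Set.diff_eq_empty] at h
      apply hp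
      apply Submodule.eq_top_of_nonempty_interior'
      obtain ⟨y, hy⟩ := hne
      exact ⟨y, interior_maximal h hU hy⟩
    obtain ⟨y, hy, hyT⟩ := ih (U \ ↑p) hU' hne' (fun q hq => hT q (Finset.mem_insert_of_mem hq))
    refine ⟨y, hy.1, fun q hq => ?_⟩
    rcases Finset.mem_insert.mp hq with rfl | hq
    · exact hy.2
    · exact hyT q hq

/-! ### Sign vectors and cells -/

def OKs (S : Finset (Submodule ℝ V3)) (h : Submodule ℝ V3) (x : V3) : Prop :=
  if h ∈ S then 0 < phi h x else phi h x < 0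

lemma OKs_ne_zero {S h x} (hx : OKs S h x) : phi h x ≠ 0 := by
  unfold OKs at hx; split at hx <;> [exact ne_of_gt hx; exact ne_of_lt hx]

lemma OKs_of_samesign {S h x y} (hx : OKs S h x) (hs : 0 < phi h y * phi h x) :
    OKs S h y := by
  unfold OKs at hx ⊢
  split at hx <;> split <;> first
    | exact pos_of_samesign hs hx
    | exact neg_of_samesign hs hx
    | simp_all

lemma OKs_samesign {S h x y} (hx : OKs S h x) (hy : OKs S h y) :
    0 < phi h x * phi h y := by
  unfold OKs at hx hy; split at hx <;> split at hy <;> first | nlinarith | simp_all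

lemma OKs_congr {S S' : Finset (Submodule ℝ V3)} {h x} (hmem : h ∈ S ↔ h ∈ S') :
    OKs S h x ↔ OKs S' h x := by
  unfold OKs
  by_cases hh : h ∈ S
  · rw [if_pos hh, if_pos (hmem.mp hh)]
  · rw [if_neg hh, if_neg (fun c => hh (hmem.mpr c))]

noncomputable def cham (L : Finset (Submodule ℝ V3)) : Finset (Finset (Submodule ℝ V3)) :=
  L.powerset.filter (fun S => ∃ x, ∀ ℓ ∈ L, OKs S ℓ x)

noncomputable def realizedOn (ℓ : Submodule ℝ V3) (M : Finset (Submodule ℝ V3)) :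
    Finset (Finset (Submodule ℝ V3)) :=
  M.powerset.filter (fun S => ∃ x ∈ ℓ, ∀ h ∈ M, OKs S h x)

def vx (L : Finset (Submodule ℝ V3)) : Finset (Submodule ℝ V3) :=
  L.offDiag.image fun q => q.1 ⊓ q.2

noncomputable def multF (L : Finset (Submodule ℝ V3)) (p : Submodule ℝ V3) : ℕ :=
  (L.filter fun ℓ => p ≤ ℓ).card

noncomputable def EE (L : Finset (Submodule ℝ V3)) : ℕ := ∑ p ∈ vx L, multF L p

noncomputable abbrev VV (L : Finset (Submodule ℝ V3)) : ℕ := (vx L).card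

section Arr

variable {L : Finset (Submodule ℝ V3)} (hL : ∀ ℓ ∈ L, IsProjLine ℓ)

include hL

lemma vx_isProjPoint {p} (hp : p ∈ vx L) : Module.finrank ℝ p = 1 := by
  obtain ⟨⟨a, b⟩, hab, rfl⟩ := Finset.mem_image.mp hp
  obtain ⟨ha, hb, hne⟩ := Finset.mem_offDiag.mp hab
  exact finrank_inf_eq_one (hL a ha) (hL b hb) hne

lemma mem_vx_iff {p} :
    p ∈ vx L ↔ Module.finrank ℝ p = 1 ∧ 2 ≤ multF L p := by
  constructor
  · intro hp
    refine ⟨vx_isProjPoint hL hp, ?_⟩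
    obtain ⟨⟨a, b⟩, hab, rfl⟩ := Finset.mem_image.mp hp
    obtain ⟨ha, hb, hne⟩ := Finset.mem_offDiag.mp hab
    have : {a, b} ⊆ L.filter fun ℓ => a ⊓ b ≤ ℓ := by
      intro c hc
      rcases Finset.mem_insert.mp hc with rfl | hc
      · exact Finset.mem_filter.mpr ⟨ha, inf_le_left⟩
      · rw [Finset.mem_singleton.mp hc]
        exact Finset.mem_filter.mpr ⟨hb, inf_le_right⟩
    calc 2 = ({a, b} : Finset (Submodule ℝ V3)).card := (Finset.card_pair hne).symm
      _ ≤ _ := Finset.card_le_card this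
  · rintro ⟨hp1, hp2⟩
    obtain ⟨a, ha, b, hb, hne⟩ := Finset.one_lt_card.mp hp2
    rw [Finset.mem_filter] at ha hb
    have hpab : p ≤ a ⊓ b := le_inf ha.2 hb.2
    have h1 : Module.finrank ℝ ↥(a ⊓ b) = 1 := finrank_inf_eq_one (hL a ha.1) (hL b hb.1) hne
    have : p = a ⊓ b := Submodule.eq_of_le_of_finrank_le hpab (by omega)
    rw [this]
    exact Finset.mem_image.mpr ⟨(a, b), Finset.mem_offDiag.mpr ⟨ha.1, hb.1, hne⟩, rfl⟩

/-- the vertices lying on a line `ℓ ∈ L` are exactly the pairwise intersections with `ℓ`. -/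
lemma vx_on_line {ℓ} (hℓ : ℓ ∈ L) :
    (vx L).filter (fun p => p ≤ ℓ) = (L.erase ℓ).image (fun g => ℓ ⊓ g) := by
  ext p
  simp only [Finset.mem_filter, Finset.mem_image]
  constructor
  · rintro ⟨hp, hple⟩
    obtain ⟨⟨a, b⟩, hab, rfl⟩ := Finset.mem_image.mp hp
    obtain ⟨ha, hb, hne⟩ := Finset.mem_offDiag.mp hab
    rcases eq_or_ne a ℓ with rfl | hal
    · refine ⟨b, Finset.mem_erase.mpr ⟨hne.symm, hb⟩, rfl⟩
    · refine ⟨a, Finset.mem_erase.mpr ⟨hal, ha⟩, ?_⟩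
      have h1 : Module.finrank ℝ ↥(ℓ ⊓ a) = 1 := finrank_inf_eq_one (hL ℓ hℓ) (hL a ha) (Ne.symm hal)
      have h2 : Module.finrank ℝ ↥(a ⊓ b) = 1 := finrank_inf_eq_one (hL a ha) (hL b hb) hne
      exact (Submodule.eq_of_le_of_finrank_le (le_inf hple inf_le_left)
        (by dsimp only at h2 ⊢; omega)).symm
  · rintro ⟨g, hg, rfl⟩
    rw [Finset.mem_erase] at hg
    exact ⟨Finset.mem_image.mpr ⟨(ℓ, g), Finset.mem_offDiag.mpr ⟨hℓ, hg.2, Ne.symm hg.1⟩, rfl⟩,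
      inf_le_left⟩

lemma EE_eq_sum_lines : EE L = ∑ ℓ ∈ L, ((vx L).filter (fun p => p ≤ ℓ)).card := by
  unfold EE multF
  simp only [Finset.card_filter]
  exact Finset.sum_comm

end Arr

/-! ### Walls -/

def wallp (L : Finset (Submodule ℝ V3)) (S : Finset (Submodule ℝ V3))
    (g : Submodule ℝ V3) : Prop :=
  ∃ z : V3, phi g z = 0 ∧ ∀ h ∈ L, h ≠ g → OKs S h z

/-- auxiliary sign computation: if `a,b` have opposite signs and `0 ≤ t < a/(a-b)` then
`a + t(b-a)` has the sign of `a`. -/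
lemma sign_before_root {a b t : ℝ} (hab : a * b < 0) (ht0 : 0 ≤ t)
    (ht : t < a / (a - b)) : 0 < (a + t * (b - a)) * a := by
  rcases mul_neg_iff.mp hab with ⟨h1, h2⟩ | ⟨h1, h2⟩
  · have hc : 0 < a - b := by linarith
    rw [lt_div_iff₀ hc] at ht
    nlinarith
  · have hc : a - b < 0 := by linarith
    rw [lt_div_iff_of_neg hc] at ht
    nlinarith

/-- A generic point having the chamber's signs on all walls lies in the chamber. -/
lemma walls_cut {L S : Finset (Submodule ℝ V3)} {x y : V3}
    (hx : ∀ h ∈ L, OKs S h x)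
    (hy0 : ∀ h ∈ L, phi h y ≠ 0)
    (hseg : ∀ g ∈ L, ∀ h ∈ L, g ≠ h →
      ∀ t : ℝ, ¬(phi g (x + t • (y - x)) = 0 ∧ phi h (x + t • (y - x)) = 0))
    (hwall : ∀ g ∈ L, wallp L S g → OKs S g y) :
    ∀ h ∈ L, OKs S h y := by
  by_contra hbad
  push_neg at hbad
  set B := L.filter (fun h => ¬ OKs S h y) with hB
  have hBne : B.Nonempty := by
    obtain ⟨h, hh, hh2⟩ := hbad
    exact ⟨h, Finset.mem_filter.mpr ⟨hh, hh2⟩⟩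
  have hBopp : ∀ h ∈ B, phi h x * phi h y < 0 := by
    intro h hh
    rw [hB, Finset.mem_filter] at hh
    have h1 := OKs_ne_zero (hx h hh.1)
    have h2 := hy0 h hh.1
    have hOx := hx h hh.1
    rcases lt_trichotomy (phi h x * phi h y) 0 with hlt | heq | hgt
    · exact hlt
    · exfalso; rcases mul_eq_zero.mp heq with c | c <;> simp_all
    · exact absurd (OKs_of_samesign hOx (by nlinarith)) hh.2
  -- root times
  set r : Submodule ℝ V3 → ℝ := fun h => phi h x / (phi h x - phi h y) with hr
  have hroot : ∀ h ∈ B, 0 < r h ∧ r h < 1 ∧ phi h (x + (r h) • (y - x)) = 0 := by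
    intro h hh
    have hopp := hBopp h hh
    have hne : phi h x - phi h y ≠ 0 := by
      intro hc
      have : phi h x = phi h y := by linarith
      rw [this] at hopp; nlinarith
    refine ⟨?_, ?_, ?_⟩
    · rcases mul_neg_iff.mp hopp with ⟨h1, h2⟩ | ⟨h1, h2⟩
      · exact div_pos h1 (by linarith)
      · exact div_pos_of_neg_of_neg h1 (by linarith)
    · rcases mul_neg_iff.mp hopp with ⟨h1, h2⟩ | ⟨h1, h2⟩
      · rw [hr]; rw [div_lt_one (by linarith)]; linarith
      · rw [hr]; rw [div_lt_one_of_neg (by linarith)]; linarith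
    · have : phi h (x + (r h) • (y - x)) = phi h x + (r h) * (phi h y - phi h x) := by
        simp [map_add, map_smul, map_sub, smul_eq_mul]; try ring
      rw [this, hr]
      field_simp
      ring
  obtain ⟨hstar, hstarB, hstarmin⟩ :
      ∃ hst ∈ B, ∀ h ∈ B, r hst ≤ r h := by
    obtain ⟨hst, hmem, hmin⟩ := B.exists_min_image r hBne
    exact ⟨hst, hmem, hmin⟩
  set t := r hstar with htdef
  set z := x + t • (y - x) with hz
  have hzstar : phi hstar z = 0 := (hroot hstar hstarB).2.2
  have ht01 : 0 < t ∧ t < 1 := ⟨(hroot hstar hstarB).1, (hroot hstar hstarB).2.1⟩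
  have hstarL : hstar ∈ L := (Finset.mem_filter.mp hstarB).1
  -- all other planes: nonzero at z with sign of x
  have hothers : ∀ h ∈ L, h ≠ hstar → OKs S h z := by
    intro h hh hne
    have hz0 : phi h z ≠ 0 := by
      intro hc
      exact hseg h hh hstar hstarL hne t ⟨by rw [← hz]; exact hc, by rw [← hz]; exact hzstar⟩
    have hcalc : phi h z = phi h x + t * (phi h y - phi h x) := by
      rw [hz]; simp [map_add, map_smul, map_sub, smul_eq_mul]; try ring
    by_cases hhB : h ∈ B
    · -- sign of x since t < r h
      have hlt : t < r h := by
        rcases lt_or_eq_of_le (hstarmin h hhB) with hlt | heq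
        · exact hlt
        · exfalso
          apply hz0
          rw [hz, heq]
          exact (hroot h hhB).2.2
      have := sign_before_root (hBopp h hhB) (le_of_lt ht01.1) hlt
      have hgoal : 0 < phi h z * phi h x := by
        rw [hcalc]
        calc (0:ℝ) < (phi h x + t * (phi h y - phi h x)) * phi h x := by
              have := sign_before_root (a := phi h x) (b := phi h y) (hBopp h hhB)
                (le_of_lt ht01.1) hlt
              linarith [this]
          _ = _ := by ring
      exact OKs_of_samesign (hx h hh) hgoal
    · -- same sign at x and y
      have hOy : OKs S h y := by
        rw [hB, Finset.mem_filter] at hhB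
        push_neg at hhB
        exact hhB hh
      have hsame : 0 < phi h x * phi h y := OKs_samesign (hx h hh) hOy
      have hgoal : 0 < phi h z * phi h x := by
        rw [hcalc]
        have : phi h x + t * (phi h y - phi h x) = (1 - t) * phi h x + t * phi h y := by ring
        rw [this]
        exact samesign_comb hsame (le_of_lt ht01.1) (le_of_lt ht01.2)
      exact OKs_of_samesign (hx h hh) hgoal
  -- hence hstar is a wall
  have hw : wallp L S hstar := ⟨z, hzstar, hothers⟩
  have := hwall hstar hstarL hw
  rw [hB, Finset.mem_filter] at hstarB
  exact hstarB.2 this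

/-! ### sig: the sign pattern of a point -/

noncomputable def sig (M : Finset (Submodule ℝ V3)) (z : V3) : Finset (Submodule ℝ V3) :=
  M.filter (fun h => 0 < phi h z)

lemma sig_subset {M z} : sig M z ⊆ M := Finset.filter_subset _ _

lemma OKs_sig {M : Finset (Submodule ℝ V3)} {z : V3} (hz : ∀ h ∈ M, phi h z ≠ 0) :
    ∀ h ∈ M, OKs (sig M z) h z := by
  intro h hh
  unfold OKs sig
  by_cases hp : 0 < phi h z
  · rw [if_pos (Finset.mem_filter.mpr ⟨hh, hp⟩)]; exact hp
  · have hns : h ∉ Finset.filter (fun h => 0 < phi h z) M :=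
      fun c => hp (Finset.mem_filter.mp c).2
    rw [if_neg hns]
    exact lt_of_le_of_ne (not_lt.mp hp) (hz h hh)

lemma sig_eq_of_OKs {M S : Finset (Submodule ℝ V3)} {z : V3} (hS : S ⊆ M)
    (h : ∀ h ∈ M, OKs S h z) : S = sig M z := by
  ext g
  simp only [sig, Finset.mem_filter]
  constructor
  · intro hg
    have hgM := hS hg
    have := h g hgM
    unfold OKs at this
    rw [if_pos hg] at this
    exact ⟨hgM, this⟩
  · rintro ⟨hgM, hgpos⟩
    by_contra hgS
    have := h g hgM
    unfold OKs at this
    rw [if_neg hgS] at this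
    linarith

lemma sig_insert {M : Finset (Submodule ℝ V3)} {g : Submodule ℝ V3} (hg : g ∉ M) (z : V3) :
    sig (insert g M) z = if 0 < phi g z then insert g (sig M z) else sig M z := by
  unfold sig
  rw [Finset.filter_insert]

lemma sig_smul_pos {M : Finset (Submodule ℝ V3)} {z : V3} {c : ℝ} (hc : 0 < c) :
    sig M (c • z) = sig M z := by
  unfold sig
  apply Finset.filter_congr
  intro h _
  rw [map_smul, smul_eq_mul]
  constructor
  · intro hp; nlinarith
  · intro hp; positivity

lemma sig_smul_neg {M : Finset (Submodule ℝ V3)} {z : V3} {c : ℝ} (hc : c < 0) :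
    sig M (c • z) = sig M (-z) := by
  have : c • z = (-c) • (-z) := by simp
  rw [this, sig_smul_pos (by linarith)]

/-! ### helpers about lines -/

lemma line_ne_imp_not_le {ℓ g : Submodule ℝ V3} (hℓ : IsProjLine ℓ) (hg : IsProjLine g)
    (hne : ℓ ≠ g) : ∃ w ∈ ℓ, phi g w ≠ 0 := by
  by_contra h
  push_neg at h
  have hle : ℓ ≤ g := fun w hw => (mem_iff_phi hg).mpr (h w hw)
  have h2 : Module.finrank ℝ g = 2 := hg
  have h1 : Module.finrank ℝ ℓ = 2 := hℓ
  exact hne (Submodule.eq_of_le_of_finrank_le hle (by omega))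

lemma span_eq_of_rank1 {p : Submodule ℝ V3} (hp : Module.finrank ℝ p = 1) {z : V3}
    (hz : z ∈ p) (h0 : z ≠ 0) : Submodule.span ℝ {z} = p := by
  have hle : Submodule.span ℝ {z} ≤ p := by
    rw [Submodule.span_le, Set.singleton_subset_iff]; exact hz
  exact Submodule.eq_of_le_of_finrank_le hle (by rw [finrank_span_singleton h0]; omega)

lemma exists_nonzero_of_rank1 {p : Submodule ℝ V3} (hp : Module.finrank ℝ p = 1) :
    ∃ z ∈ p, z ≠ (0 : V3) := by
  by_contra h
  push_neg at h
  have : p = ⊥ := by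
    rw [Submodule.eq_bot_iff]
    exact fun z hz => h z hz
  rw [this, finrank_bot] at hp
  omega

/-- a point of `ℓ` avoiding finitely many lines not containing `ℓ` -/
lemma exists_generic_on_line {ℓ : Submodule ℝ V3} (T : Finset (Submodule ℝ V3))
    (hT : ∀ g ∈ T, ∃ w ∈ ℓ, phi g w ≠ 0) :
    ∃ z ∈ ℓ, ∀ g ∈ T, phi g z ≠ 0 := by
  classical
  induction T using Finset.induction_on with
  | empty => exact ⟨0, Submodule.zero_mem ℓ, by simp⟩
  | insert _ _ hgnot _ =>
    rename_i g T ih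
    obtain ⟨z, hzℓ, hz⟩ := ih (fun h hh => hT h (Finset.mem_insert_of_mem hh))
    by_cases hgz : phi g z ≠ 0
    · refine ⟨z, hzℓ, fun h hh => ?_⟩
      rcases Finset.mem_insert.mp hh with rfl | hh
      · exact hgz
      · exact hz h hh
    · push_neg at hgz
      obtain ⟨w, hwℓ, hgw⟩ := hT g (Finset.mem_insert_self g T)
      -- choose c avoiding finitely many bad values
      set bad : Finset ℝ := insert 0 (T.image (fun h => -(phi h z)/(phi h w))) with hbad
      obtain ⟨c, hc⟩ := Infinite.exists_notMem_finset bad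
      have hc0 : c ≠ 0 := fun h => hc (h ▸ Finset.mem_insert_self 0 _)
      refine ⟨z + c • w, Submodule.add_mem ℓ hzℓ (Submodule.smul_mem ℓ c hwℓ), fun h hh => ?_⟩
      rcases Finset.mem_insert.mp hh with rfl | hh
      · rw [map_add, map_smul, smul_eq_mul, hgz, zero_add]
        exact mul_ne_zero hc0 hgw
      · rw [map_add, map_smul, smul_eq_mul]
        intro hzero
        by_cases hw0 : phi h w = 0
        · rw [hw0, mul_zero, add_zero] at hzero
          exact hz h hh hzero
        · apply hc
          rw [hbad]
          apply Finset.mem_insert_of_mem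
          apply Finset.mem_image.mpr
          refine ⟨h, hh, ?_⟩
          field_simp
          linarith [hzero]

/-- the key algebraic rigidity: if `ℓ⊓g = ℓ⊓h` then the sign of `phi g` on `ℓ` is
determined by the sign of `phi h`. -/
lemma sign_locked {ℓ g h : Submodule ℝ V3} (hg : IsProjLine g) (hh : IsProjLine h)
    (hker : ℓ ⊓ g = ℓ ⊓ h) {x₁ x₂ : V3} (hx₁ : x₁ ∈ ℓ) (hx₂ : x₂ ∈ ℓ)
    (hh12 : 0 < phi h x₁ * phi h x₂) (hg1 : phi g x₁ ≠ 0) (hg2 : phi g x₂ ≠ 0) :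
    0 < phi g x₁ * phi g x₂ := by
  set y : V3 := (phi g x₂) • x₁ - (phi g x₁) • x₂ with hy
  have hyℓ : y ∈ ℓ := Submodule.sub_mem ℓ (Submodule.smul_mem ℓ _ hx₁) (Submodule.smul_mem ℓ _ hx₂)
  have hyg : phi g y = 0 := by
    rw [hy]; simp [map_sub, map_smul, smul_eq_mul]; ring
  have hymem : y ∈ ℓ ⊓ h := by
    rw [← hker]
    exact Submodule.mem_inf.mpr ⟨hyℓ, (mem_iff_phi hg).mpr hyg⟩
  have hyh : phi h y = 0 := (mem_iff_phi hh).mp (Submodule.mem_inf.mp hymem).2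
  have E : phi g x₂ * phi h x₁ = phi g x₁ * phi h x₂ := by
    have : phi h y = phi g x₂ * phi h x₁ - phi g x₁ * phi h x₂ := by
      rw [hy]; simp [map_sub, map_smul, smul_eq_mul]
    rw [this] at hyh
    linarith
  have E1 : phi g x₁ * (phi g x₂ * phi h x₁) = phi g x₁ * (phi g x₁ * phi h x₂) := by
    rw [E]
  rcases mul_pos_iff.mp hh12 with ⟨h1, h2⟩ | ⟨h1, h2⟩
  · nlinarith [E1, mul_pos (mul_self_pos.mpr hg1) h2, h1]
  · nlinarith [E1, mul_neg_of_pos_of_neg (mul_self_pos.mpr hg1) h2, h1]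

/-! ### realizedOn basic lemmas -/

lemma mem_realizedOn {ℓ : Submodule ℝ V3} {M S : Finset (Submodule ℝ V3)} :
    S ∈ realizedOn ℓ M ↔ S ⊆ M ∧ ∃ x ∈ ℓ, ∀ h ∈ M, OKs S h x := by
  unfold realizedOn
  rw [Finset.mem_filter, Finset.mem_powerset]

lemma erase_fiber {g : Submodule ℝ V3} {S S' : Finset (Submodule ℝ V3)}
    (h : S.erase g = S') : S = S' ∨ S = insert g S' := by
  by_cases hg : g ∈ S
  · right; rw [← h, Finset.insert_erase hg]
  · left; rw [← h, Finset.erase_eq_of_notMem hg]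

lemma realized_restrict {ℓ g : Submodule ℝ V3} {M S : Finset (Submodule ℝ V3)} (hg : g ∉ M)
    (hS : S ∈ realizedOn ℓ (insert g M)) : S.erase g ∈ realizedOn ℓ M := by
  obtain ⟨hsub, x, hxℓ, hx⟩ := mem_realizedOn.mp hS
  refine mem_realizedOn.mpr ⟨?_, x, hxℓ, fun h hh => ?_⟩
  · intro a ha
    have h2 := hsub (Finset.mem_of_mem_erase ha)
    rcases Finset.mem_insert.mp h2 with rfl | h3
    · exact absurd rfl (Finset.ne_of_mem_erase ha)
    · exact h3
  · have hOK := hx h (Finset.mem_insert_of_mem hh)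
    have hne : h ≠ g := fun c => hg (c ▸ hh)
    exact (OKs_congr (by simp [Finset.mem_erase, hne])).mp hOK

lemma realized_extend {ℓ g : Submodule ℝ V3} {M S' : Finset (Submodule ℝ V3)}
    (hℓ : IsProjLine ℓ) (hgline : IsProjLine g) (hgℓ : g ≠ ℓ) (hg : g ∉ M)
    (hS' : S' ∈ realizedOn ℓ M) :
    ∃ S ∈ realizedOn ℓ (insert g M), S.erase g = S' := by
  obtain ⟨hsub, x, hxℓ, hx⟩ := mem_realizedOn.mp hS'
  have hxne : ∀ h ∈ M, phi h x ≠ 0 := fun h hh => OKs_ne_zero (hx h hh)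
  obtain ⟨y, hyℓ, hysig, hyg⟩ :
      ∃ y, y ∈ ℓ ∧ (∀ h ∈ M, 0 < phi h y * phi h x) ∧ phi g y ≠ 0 := by
    by_cases hgx : phi g x ≠ 0
    · exact ⟨x, hxℓ, fun h hh => mul_self_pos.mpr (hxne h hh), hgx⟩
    · push_neg at hgx
      obtain ⟨w, hwℓ, hgw⟩ := line_ne_imp_not_le hℓ hgline (Ne.symm hgℓ)
      obtain ⟨δ, hδ, hδ'⟩ := perturb M x w hxne
      refine ⟨x + δ • w, Submodule.add_mem ℓ hxℓ (Submodule.smul_mem ℓ δ hwℓ),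
        fun h hh => hδ' δ hδ le_rfl h hh, ?_⟩
      rw [map_add, map_smul, smul_eq_mul, hgx, zero_add]
      exact mul_ne_zero (ne_of_gt hδ) hgw
  have hyM : ∀ h ∈ M, OKs S' h y := fun h hh => OKs_of_samesign (hx h hh) (hysig h hh)
  have hyne : ∀ h ∈ insert g M, phi h y ≠ 0 := by
    intro h hh
    rcases Finset.mem_insert.mp hh with rfl | hh
    · exact hyg
    · exact OKs_ne_zero (hyM h hh)
  have hgnot : g ∉ sig M y := fun c => hg (sig_subset c)
  refine ⟨sig (insert g M) y, mem_realizedOn.mpr ⟨sig_subset, y, hyℓ, OKs_sig hyne⟩, ?_⟩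
  have hS'y : S' = sig M y := sig_eq_of_OKs hsub hyM
  rw [sig_insert hg]
  split
  · rw [Finset.erase_insert hgnot, ← hS'y]
  · rw [Finset.erase_eq_of_notMem hgnot, ← hS'y]

/-- both extensions are realized at a generic point of `ℓ ⊓ g`. -/
lemma both_of_point {ℓ g : Submodule ℝ V3} {M : Finset (Submodule ℝ V3)}
    (hℓ : IsProjLine ℓ) (hgline : IsProjLine g) (hgℓ : g ≠ ℓ) (hg : g ∉ M)
    {z : V3} (hzℓ : z ∈ ℓ) (hzg : phi g z = 0) (hzne : ∀ h ∈ M, phi h z ≠ 0) :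
    sig M z ∈ realizedOn ℓ (insert g M) ∧
      insert g (sig M z) ∈ realizedOn ℓ (insert g M) := by
  obtain ⟨w, hwℓ, hgw⟩ := line_ne_imp_not_le hℓ hgline (Ne.symm hgℓ)
  have hOKz : ∀ h ∈ M, OKs (sig M z) h z := OKs_sig hzne
  have hkey : ∀ (v : V3), v ∈ ℓ → phi g v ≠ 0 →
      ∃ y ∈ ℓ, (∀ h ∈ M, 0 < phi h y * phi h z) ∧ 0 < phi g y * phi g v := by
    intro v hvℓ hgv
    obtain ⟨δ, hδ, hδ'⟩ := perturb M z v hzne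
    refine ⟨z + δ • v, Submodule.add_mem ℓ hzℓ (Submodule.smul_mem ℓ δ hvℓ),
      fun h hh => hδ' δ hδ le_rfl h hh, ?_⟩
    rw [map_add, map_smul, smul_eq_mul, hzg, zero_add]
    nlinarith [mul_self_pos.mpr hgv, hδ]
  constructor
  · -- negative side: use -w if phi g w > 0 etc; we need phi g y < 0
    obtain ⟨v, hvℓ, hgv⟩ : ∃ v ∈ ℓ, phi g v < 0 := by
      rcases lt_or_gt_of_ne hgw with h | h
      · exact ⟨w, hwℓ, h⟩
      · exact ⟨-w, Submodule.neg_mem ℓ hwℓ, by simpa using by linarith⟩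
    obtain ⟨y, hyℓ, hyM, hyg⟩ := hkey v hvℓ (ne_of_lt hgv)
    have hygneg : phi g y < 0 := neg_of_samesign hyg hgv
    refine mem_realizedOn.mpr ⟨fun a ha => Finset.mem_insert_of_mem (sig_subset ha),
      y, hyℓ, fun h hh => ?_⟩
    rcases Finset.mem_insert.mp hh with rfl | hh
    · unfold OKs
      rw [if_neg (fun c => hg (sig_subset c))]
      exact hygneg
    · exact OKs_of_samesign (hOKz h hh) (hyM h hh)
  · obtain ⟨v, hvℓ, hgv⟩ : ∃ v ∈ ℓ, 0 < phi g v := by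
      rcases lt_or_gt_of_ne hgw with h | h
      · exact ⟨-w, Submodule.neg_mem ℓ hwℓ, by simpa using by linarith⟩
      · exact ⟨w, hwℓ, h⟩
    obtain ⟨y, hyℓ, hyM, hyg⟩ := hkey v hvℓ (ne_of_gt hgv)
    have hygpos : 0 < phi g y := pos_of_samesign hyg hgv
    refine mem_realizedOn.mpr ⟨?_, y, hyℓ, fun h hh => ?_⟩
    · intro a ha
      rcases Finset.mem_insert.mp ha with rfl | ha
      · exact Finset.mem_insert_self a _
      · exact Finset.mem_insert_of_mem (sig_subset ha)
    · rcases Finset.mem_insert.mp hh with rfl | hh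
      · unfold OKs
        rw [if_pos (Finset.mem_insert_self h _)]
        exact hygpos
      · have hOK := OKs_of_samesign (hOKz h hh) (hyM h hh)
        have hne : h ≠ g := fun c => hg (c ▸ hh)
        exact (OKs_congr (by simp [Finset.mem_insert, hne])).mp hOK

/-! ### The 2D cell count -/

lemma pair_filter_card {α : Type*} [DecidableEq α] (P : α → Prop) [DecidablePred P]
    {a b : α} (hab : a ≠ b) :
    (({a, b} : Finset α).filter P).card =
      (if P a then 1 else 0) + (if P b then 1 else 0) := by
  rw [show ({a, b} : Finset α) = insert a {b} from rfl, Finset.filter_insert,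
    Finset.filter_singleton]
  by_cases hPa : P a <;> by_cases hPb : P b <;> simp [hPa, hPb, hab]

lemma realizedOn_card {ℓ : Submodule ℝ V3} (hℓ : IsProjLine ℓ)
    (M : Finset (Submodule ℝ V3)) (hM : M.Nonempty) (hMl : ∀ g ∈ M, IsProjLine g)
    (hMne : ∀ g ∈ M, g ≠ ℓ) :
    (realizedOn ℓ M).card = 2 * (M.image fun g => ℓ ⊓ g).card := by
  classical
  induction M using Finset.induction_on with
  | empty => exact absurd hM (by simp)
  | insert _ _ hgnot _ =>
    rename_i g M ih
    have hgline : IsProjLine g := hMl g (Finset.mem_insert_self g M)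
    have hgℓ : g ≠ ℓ := hMne g (Finset.mem_insert_self g M)
    rcases Finset.eq_empty_or_nonempty M with rfl | hMne'
    · -- base case: a single line
      have hie : (insert g ∅ : Finset (Submodule ℝ V3)) = {g} := rfl
      rw [hie]
      have h1 : realizedOn ℓ {g} = {∅, {g}} := by
        ext S
        rw [mem_realizedOn]
        constructor
        · rintro ⟨hsub, -⟩
          rcases Finset.subset_singleton_iff.mp hsub with rfl | rfl <;> simp
        · intro hS
          obtain ⟨w, hwℓ, hgw⟩ := line_ne_imp_not_le hℓ hgline (Ne.symm hgℓ)
          obtain ⟨wp, hwpℓ, hwp⟩ : ∃ v ∈ ℓ, 0 < phi g v := by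
            rcases lt_or_gt_of_ne hgw with h | h
            · exact ⟨-w, Submodule.neg_mem ℓ hwℓ, by simpa using by linarith⟩
            · exact ⟨w, hwℓ, h⟩
          rcases Finset.mem_insert.mp hS with rfl | hS
          · refine ⟨Finset.empty_subset _, -wp, Submodule.neg_mem ℓ hwpℓ, fun h hh => ?_⟩
            rw [Finset.mem_singleton.mp hh]
            unfold OKs
            rw [if_neg (Finset.notMem_empty _)]
            simpa using by linarith
          · rw [Finset.mem_singleton.mp hS]
            refine ⟨le_refl _, wp, hwpℓ, fun h hh => ?_⟩
            rw [Finset.mem_singleton.mp hh]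
            unfold OKs
            rw [if_pos (Finset.mem_singleton_self _)]
            exact hwp
      rw [h1]
      rw [Finset.card_insert_of_notMem (by simpa using (Finset.singleton_ne_empty g).symm),
        Finset.card_singleton]
      simp
    · -- inductive step
      have hMl' : ∀ h ∈ M, IsProjLine h := fun h hh => hMl h (Finset.mem_insert_of_mem hh)
      have hMne'' : ∀ h ∈ M, h ≠ ℓ := fun h hh => hMne h (Finset.mem_insert_of_mem hh)
      have IH := ih hMne' hMl' hMne''
      by_cases hker : ℓ ⊓ g ∈ M.image (fun h => ℓ ⊓ h)
      · -- old kernel: count unchanged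
        obtain ⟨h₀, hh₀M, hh₀⟩ := Finset.mem_image.mp hker
        have himg : (insert g M).image (fun h => ℓ ⊓ h) = M.image (fun h => ℓ ⊓ h) := by
          rw [Finset.image_insert, Finset.insert_eq_self]
          exact hker
        rw [himg, ← IH]
        apply Finset.card_bij (fun S _ => S.erase g)
        · intro S hS
          exact realized_restrict hgnot hS
        · -- injectivity
          intro S₁ hS₁ S₂ hS₂ heq
          by_contra hne
          -- then S' and insert g S' are both realized
          have h12 : (S₁ = S₁.erase g ∨ S₁ = insert g (S₁.erase g)) := erase_fiber rfl
          have h22 : (S₂ = S₁.erase g ∨ S₂ = insert g (S₁.erase g)) := by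
            have h0 : (S₂ = S₂.erase g ∨ S₂ = insert g (S₂.erase g)) := erase_fiber rfl
            rwa [← heq] at h0
          have hg_not_S' : g ∉ S₁.erase g := Finset.notMem_erase _ _
          have hboth : (S₁.erase g) ∈ realizedOn ℓ (insert g M) ∧
              insert g (S₁.erase g) ∈ realizedOn ℓ (insert g M) := by
            rcases h12 with h12 | h12 <;> rcases h22 with h22 | h22
            · exact absurd (h12.trans h22.symm) hne
            · refine ⟨?_, ?_⟩
              · have h3 := hS₁; rwa [h12] at h3
              · have h3 := hS₂; rwa [h22] at h3
            · refine ⟨?_, ?_⟩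
              · have h3 := hS₂; rwa [h22] at h3
              · have h3 := hS₁; rwa [h12] at h3
            · exact absurd (h12.trans h22.symm) hne
          obtain ⟨hA, hB⟩ := hboth
          obtain ⟨hsubA, x₂, hx₂ℓ, hx₂⟩ := mem_realizedOn.mp hA
          obtain ⟨hsubB, x₁, hx₁ℓ, hx₁⟩ := mem_realizedOn.mp hB
          have hgx₂ : phi g x₂ < 0 := by
            have := hx₂ g (Finset.mem_insert_self g M)
            unfold OKs at this
            rwa [if_neg hg_not_S'] at this
          have hgx₁ : 0 < phi g x₁ := by
            have := hx₁ g (Finset.mem_insert_self g M)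
            unfold OKs at this
            rwa [if_pos (Finset.mem_insert_self g _)] at this
          have hsame : 0 < phi h₀ x₁ * phi h₀ x₂ := by
            have hOK₁ := hx₁ h₀ (Finset.mem_insert_of_mem hh₀M)
            have hOK₂ := hx₂ h₀ (Finset.mem_insert_of_mem hh₀M)
            have hne₀ : h₀ ≠ g := fun c => hgnot (c ▸ hh₀M)
            have hOK₁' : OKs (S₁.erase g) h₀ x₁ :=
              (OKs_congr (by simp [Finset.mem_insert, hne₀])).mp hOK₁
            exact OKs_samesign hOK₁' hOK₂
          have := sign_locked hgline (hMl' h₀ hh₀M) hh₀.symm hx₁ℓ hx₂ℓ hsame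
            (ne_of_gt hgx₁) (ne_of_lt hgx₂)
          nlinarith
        · -- surjectivity
          intro S' hS'
          obtain ⟨S, hS, hSe⟩ := realized_extend hℓ hgline hgℓ hgnot hS'
          exact ⟨S, hS, hSe⟩
      · -- new kernel: count increases by 2
        have himg : ((insert g M).image (fun h => ℓ ⊓ h)).card
            = (M.image (fun h => ℓ ⊓ h)).card + 1 := by
          rw [Finset.image_insert, Finset.card_insert_of_notMem hker]
        rw [himg, Nat.mul_add, mul_one, ← IH]
        -- find the generic z on ℓ ⊓ g
        have hrank : Module.finrank ℝ ↥(ℓ ⊓ g) = 1 := finrank_inf_eq_one hℓ hgline (Ne.symm hgℓ)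
        obtain ⟨z, hzmem, hz0⟩ := exists_nonzero_of_rank1 hrank
        have hspan : Submodule.span ℝ {z} = ℓ ⊓ g := span_eq_of_rank1 hrank hzmem hz0
        have hzℓ : z ∈ ℓ := (Submodule.mem_inf.mp hzmem).1
        have hzg : phi g z = 0 := (mem_iff_phi hgline).mp (Submodule.mem_inf.mp hzmem).2
        have hzne : ∀ h ∈ M, phi h z ≠ 0 := by
          intro h hh hc
          apply hker
          have hzh : z ∈ ℓ ⊓ h := Submodule.mem_inf.mpr ⟨hzℓ, (mem_iff_phi (hMl' h hh)).mpr hc⟩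
          have hrankh : Module.finrank ℝ ↥(ℓ ⊓ h) = 1 :=
            finrank_inf_eq_one hℓ (hMl' h hh) (Ne.symm (hMne'' h hh))
          have hspan2 : Submodule.span ℝ {z} = ℓ ⊓ h := span_eq_of_rank1 hrankh hzh hz0
          exact Finset.mem_image.mpr ⟨h, hh, by rw [← hspan2, hspan]⟩
        have hzneg : ∀ h ∈ M, phi h (-z) ≠ 0 := by
          intro h hh
          rw [map_neg]
          exact neg_ne_zero.mpr (hzne h hh)
        -- the two special sign patterns
        set S₁ := sig M z with hS₁def
        set S₂ := sig M (-z) with hS₂def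
        have hS₁S₂ : S₁ ≠ S₂ := by
          obtain ⟨h₀, hh₀⟩ := hMne'
          intro hc
          have h1 : (h₀ ∈ S₁) ↔ (h₀ ∈ S₂) := by rw [hc]
          simp only [hS₁def, hS₂def, sig, Finset.mem_filter, map_neg] at h1
          have := hzne h₀ hh₀
          rcases lt_or_gt_of_ne this with hlt | hgt
          · have := h1.mpr ⟨hh₀, by linarith⟩; linarith [this.2]
          · have := h1.mp ⟨hh₀, hgt⟩; linarith [this.2]
        have hS₁mem : S₁ ∈ realizedOn ℓ M :=
          mem_realizedOn.mpr ⟨sig_subset, z, hzℓ, OKs_sig hzne⟩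
        have hS₂mem : S₂ ∈ realizedOn ℓ M :=
          mem_realizedOn.mpr ⟨sig_subset, -z, Submodule.neg_mem ℓ hzℓ, OKs_sig hzneg⟩
        -- fiberwise count
        rw [Finset.card_eq_sum_card_fiberwise
          (f := fun S => S.erase g) (t := realizedOn ℓ M)
          (fun S hS => realized_restrict hgnot hS)]
        have hfib : ∀ S' ∈ realizedOn ℓ M,
            ((realizedOn ℓ (insert g M)).filter (fun S => S.erase g = S')).card
            = if S' = S₁ ∨ S' = S₂ then 2 else 1 := by
          intro S' hS'
          obtain ⟨hsub', x', hx'ℓ, hx'⟩ := mem_realizedOn.mp hS'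
          have hg_not_S' : g ∉ S' := fun c => hgnot (hsub' c)
          have hpair : (realizedOn ℓ (insert g M)).filter (fun S => S.erase g = S')
              = ({S', insert g S'} : Finset _).filter (fun S => S ∈ realizedOn ℓ (insert g M)) := by
            ext T
            simp only [Finset.mem_filter, Finset.mem_insert, Finset.mem_singleton]
            constructor
            · rintro ⟨hT, hTe⟩
              refine ⟨?_, hT⟩
              rcases erase_fiber hTe with h | h
              · left; exact h
              · right; exact h
            · rintro ⟨hT, hTr⟩
              refine ⟨hTr, ?_⟩
              rcases hT with rfl | rfl
              · exact Finset.erase_eq_of_notMem hg_not_S'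
              · exact Finset.erase_insert hg_not_S'
          rw [hpair, pair_filter_card _ (by
            intro hc
            exact hg_not_S' (hc ▸ Finset.mem_insert_self g S'))]
          by_cases hBset : S' = S₁ ∨ S' = S₂
          · rw [if_pos hBset]
            have hboth : S' ∈ realizedOn ℓ (insert g M) ∧
                insert g S' ∈ realizedOn ℓ (insert g M) := by
              rcases hBset with rfl | rfl
              · exact both_of_point hℓ hgline hgℓ hgnot hzℓ hzg hzne
              · exact both_of_point hℓ hgline hgℓ hgnot (Submodule.neg_mem ℓ hzℓ)
                  (by rw [map_neg, hzg, neg_zero]) hzneg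
            rw [if_pos hboth.1, if_pos hboth.2]
          · rw [if_neg hBset]
            -- exactly one extension: not both
            have hnotboth : ¬ (S' ∈ realizedOn ℓ (insert g M) ∧
                insert g S' ∈ realizedOn ℓ (insert g M)) := by
              rintro ⟨hA, hB⟩
              apply hBset
              obtain ⟨-, x₂, hx₂ℓ, hx₂⟩ := mem_realizedOn.mp hA
              obtain ⟨-, x₁, hx₁ℓ, hx₁⟩ := mem_realizedOn.mp hB
              have hgx₂ : phi g x₂ < 0 := by
                have := hx₂ g (Finset.mem_insert_self g M)
                unfold OKs at this
                rwa [if_neg hg_not_S'] at this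
              have hgx₁ : 0 < phi g x₁ := by
                have := hx₁ g (Finset.mem_insert_self g M)
                unfold OKs at this
                rwa [if_pos (Finset.mem_insert_self g S')] at this
              have hOK₁ : ∀ h ∈ M, OKs S' h x₁ := by
                intro h hh
                have := hx₁ h (Finset.mem_insert_of_mem hh)
                have hne₀ : h ≠ g := fun c => hgnot (c ▸ hh)
                exact (OKs_congr (by simp [Finset.mem_insert, hne₀])).mp this
              have hOK₂ : ∀ h ∈ M, OKs S' h x₂ := by
                intro h hh
                exact hx₂ h (Finset.mem_insert_of_mem hh)
              obtain ⟨z', hz'g, hz'sig, t, ht0, ht1, hz'⟩ :=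
                crossing M g x₁ x₂ (fun h hh => OKs_samesign (hOK₁ h hh) (hOK₂ h hh))
                  (by nlinarith)
              have hz'ℓ : z' ∈ ℓ := by
                rw [hz']
                exact Submodule.add_mem ℓ hx₁ℓ
                  (Submodule.smul_mem ℓ t (Submodule.sub_mem ℓ hx₂ℓ hx₁ℓ))
              have hz'ne : ∀ h ∈ M, phi h z' ≠ 0 := by
                intro h hh
                have := hz'sig h hh
                intro hc
                rw [hc] at this
                simp at this
              have hz'0 : z' ≠ 0 := by
                obtain ⟨h₀, hh₀⟩ := hMne'
                intro hc
                exact hz'ne h₀ hh₀ (by rw [hc, map_zero])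
              -- z' ∈ span {z}
              have hz'mem : z' ∈ Submodule.span ℝ {z} := by
                rw [hspan]
                exact Submodule.mem_inf.mpr ⟨hz'ℓ, (mem_iff_phi hgline).mpr hz'g⟩
              obtain ⟨c, hc⟩ := Submodule.mem_span_singleton.mp hz'mem
              have hcne : c ≠ 0 := by
                rintro rfl
                rw [zero_smul] at hc
                exact hz'0 hc.symm
              -- S' is the sign pattern of z'
              have hS'z' : S' = sig M z' := by
                apply sig_eq_of_OKs hsub'
                intro h hh
                exact OKs_of_samesign (hOK₁ h hh) (hz'sig h hh)
              rcases lt_or_gt_of_ne hcne with hneg | hpos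
              · right
                rw [hS'z', ← hc, sig_smul_neg hneg, hS₂def]
              · left
                rw [hS'z', ← hc, sig_smul_pos hpos, hS₁def]
            -- at least one extension
            obtain ⟨S, hS, hSe⟩ := realized_extend hℓ hgline hgℓ hgnot hS'
            rcases erase_fiber hSe with rfl | h2
            · rw [if_pos hS, if_neg (fun c => hnotboth ⟨hS, c⟩)]
            · have : insert g S' ∈ realizedOn ℓ (insert g M) := by rw [← h2]; exact hS
              rw [if_pos this, if_neg (fun c => hnotboth ⟨c, this⟩)]
        rw [Finset.sum_congr rfl hfib]
        have hsplit : ∑ S' ∈ realizedOn ℓ M, (if S' = S₁ ∨ S' = S₂ then 2 else 1)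
            = (realizedOn ℓ M).card + ((realizedOn ℓ M).filter
              (fun S' => S' = S₁ ∨ S' = S₂)).card := by
          rw [Finset.card_filter, Finset.card_eq_sum_ones (realizedOn ℓ M), ← Finset.sum_add_distrib]
          apply Finset.sum_congr rfl
          intro S' _
          by_cases h : S' = S₁ ∨ S' = S₂
          · rw [if_pos h, if_pos h]
          · rw [if_neg h, if_neg h]
        rw [hsplit]
        have hfilt : (realizedOn ℓ M).filter (fun S' => S' = S₁ ∨ S' = S₂) = {S₁, S₂} := by
          ext T
          simp only [Finset.mem_filter, Finset.mem_insert, Finset.mem_singleton]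
          constructor
          · rintro ⟨-, h⟩; exact h
          · rintro (rfl | rfl)
            · exact ⟨hS₁mem, Or.inl rfl⟩
            · exact ⟨hS₂mem, Or.inr rfl⟩
        rw [hfilt, Finset.card_insert_of_notMem (by simpa using hS₁S₂), Finset.card_singleton]

/-! ### Chamber counting -/

lemma mem_cham {L S : Finset (Submodule ℝ V3)} :
    S ∈ cham L ↔ S ⊆ L ∧ ∃ x, ∀ ℓ ∈ L, OKs S ℓ x := by
  unfold cham
  rw [Finset.mem_filter, Finset.mem_powerset]

lemma cham_restrict {ℓ : Submodule ℝ V3} {L S : Finset (Submodule ℝ V3)} (hℓ : ℓ ∈ L)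
    (hS : S ∈ cham L) : S.erase ℓ ∈ cham (L.erase ℓ) := by
  obtain ⟨hsub, x, hx⟩ := mem_cham.mp hS
  refine mem_cham.mpr ⟨Finset.erase_subset_erase _ hsub, x, fun h hh => ?_⟩
  have hne := Finset.ne_of_mem_erase hh
  have hOK := hx h (Finset.mem_of_mem_erase hh)
  exact (OKs_congr (by simp [Finset.mem_erase, hne])).mp hOK

lemma realizedOn_subset_cham {ℓ : Submodule ℝ V3} {L' S : Finset (Submodule ℝ V3)}
    (hS : S ∈ realizedOn ℓ L') : S ∈ cham L' := by
  obtain ⟨hsub, x, _, hx⟩ := mem_realizedOn.mp hS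
  exact mem_cham.mpr ⟨hsub, x, hx⟩

lemma cham_step {L : Finset (Submodule ℝ V3)} {ℓ : Submodule ℝ V3}
    (hℓL : ℓ ∈ L) (hℓ : IsProjLine ℓ) (hlines : ∀ g ∈ L, IsProjLine g) :
    (cham L).card = (cham (L.erase ℓ)).card + (realizedOn ℓ (L.erase ℓ)).card := by
  classical
  set L' := L.erase ℓ with hL'def
  have hins : L = insert ℓ L' := by rw [hL'def, Finset.insert_erase hℓL]
  have hℓnot : ℓ ∉ L' := Finset.notMem_erase _ _
  rw [Finset.card_eq_sum_card_fiberwise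
    (f := fun S => S.erase ℓ) (t := cham L') (fun S hS => cham_restrict hℓL hS)]
  have hfib : ∀ S' ∈ cham L',
      ((cham L).filter (fun S => S.erase ℓ = S')).card
      = 1 + (if S' ∈ realizedOn ℓ L' then 1 else 0) := by
    intro S' hS'
    obtain ⟨hsub', x', hx'⟩ := mem_cham.mp hS'
    have hℓ_not_S' : ℓ ∉ S' := fun c => hℓnot (hsub' c)
    have hpair : (cham L).filter (fun S => S.erase ℓ = S')
        = ({S', insert ℓ S'} : Finset _).filter (fun S => S ∈ cham L) := by
      ext T
      simp only [Finset.mem_filter, Finset.mem_insert, Finset.mem_singleton]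
      constructor
      · rintro ⟨hT, hTe⟩
        refine ⟨?_, hT⟩
        rcases erase_fiber hTe with h | h
        · left; exact h
        · right; exact h
      · rintro ⟨hT, hTr⟩
        refine ⟨hTr, ?_⟩
        rcases hT with rfl | rfl
        · exact Finset.erase_eq_of_notMem hℓ_not_S'
        · exact Finset.erase_insert hℓ_not_S'
    rw [hpair, pair_filter_card _ (by
      intro c
      exact hℓ_not_S' (c ▸ Finset.mem_insert_self ℓ S'))]
    -- extensions realized in 3D
    have hOKx' : ∀ h ∈ L', phi h x' ≠ 0 := fun h hh => OKs_ne_zero (hx' h hh)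
    by_cases hreal : S' ∈ realizedOn ℓ L'
    · rw [if_pos hreal]
      obtain ⟨-, z, hzℓ, hz⟩ := mem_realizedOn.mp hreal
      have hzne : ∀ h ∈ L', phi h z ≠ 0 := fun h hh => OKs_ne_zero (hz h hh)
      obtain ⟨v, hv⟩ := exists_phi_pos hℓ
      have hboth : ∀ (w : V3), 0 < phi ℓ w ∨ phi ℓ w < 0 →
          ∃ y, (∀ h ∈ L', OKs S' h y) ∧ (0 < phi ℓ y * phi ℓ w) := by
        intro w hw
        obtain ⟨δ, hδ, hδ'⟩ := perturb L' z w hzne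
        refine ⟨z + δ • w, fun h hh =>
          OKs_of_samesign (hz h hh) (hδ' δ hδ le_rfl h hh), ?_⟩
        have hz0 : phi ℓ z = 0 := (mem_iff_phi hℓ).mp hzℓ
        rw [map_add, map_smul, smul_eq_mul, hz0, zero_add]
        rcases hw with hw | hw
        · nlinarith [mul_pos hw hw]
        · nlinarith [mul_pos_of_neg_of_neg hw hw]
      have hposmem : insert ℓ S' ∈ cham L := by
        obtain ⟨y, hyOK, hyℓ⟩ := hboth v (Or.inl hv)
        have hypos : 0 < phi ℓ y := pos_of_samesign hyℓ hv
        refine mem_cham.mpr ⟨?_, y, fun h hh => ?_⟩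
        · rw [hins]
          exact Finset.insert_subset_insert _ hsub'
        · rw [hins] at hh
          rcases Finset.mem_insert.mp hh with rfl | hh
          · unfold OKs
            rw [if_pos (Finset.mem_insert_self h S')]
            exact hypos
          · have hne : h ≠ ℓ := fun c => hℓnot (c ▸ hh)
            exact (OKs_congr (by simp [Finset.mem_insert, hne])).mp (hyOK h hh)
      have hnegmem : S' ∈ cham L := by
        obtain ⟨y, hyOK, hyℓ⟩ := hboth (-v) (Or.inr (by rw [map_neg]; linarith))
        have hyneg : phi ℓ y < 0 := by
          rw [map_neg] at hyℓ
          nlinarith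
        refine mem_cham.mpr ⟨?_, y, fun h hh => ?_⟩
        · rw [hins]
          exact hsub'.trans (Finset.subset_insert _ _)
        · rw [hins] at hh
          rcases Finset.mem_insert.mp hh with rfl | hh
          · unfold OKs
            rw [if_neg hℓ_not_S']
            exact hyneg
          · exact hyOK h hh
      rw [if_pos hnegmem, if_pos hposmem]
    · rw [if_neg hreal]
      -- exactly one extension
      have hnotboth : ¬ (S' ∈ cham L ∧ insert ℓ S' ∈ cham L) := by
        rintro ⟨hA, hB⟩
        apply hreal
        obtain ⟨-, x₂, hx₂⟩ := mem_cham.mp hA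
        obtain ⟨-, x₁, hx₁⟩ := mem_cham.mp hB
        have hℓL' : ℓ ∈ L := hℓL
        have hgx₂ : phi ℓ x₂ < 0 := by
          have := hx₂ ℓ hℓL'
          unfold OKs at this
          rwa [if_neg hℓ_not_S'] at this
        have hgx₁ : 0 < phi ℓ x₁ := by
          have := hx₁ ℓ hℓL'
          unfold OKs at this
          rwa [if_pos (Finset.mem_insert_self ℓ S')] at this
        have hOK₁ : ∀ h ∈ L', OKs S' h x₁ := by
          intro h hh
          have hmem := Finset.mem_of_mem_erase hh
          have hne : h ≠ ℓ := Finset.ne_of_mem_erase hh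
          exact (OKs_congr (by simp [Finset.mem_insert, hne])).mp (hx₁ h hmem)
        have hOK₂ : ∀ h ∈ L', OKs S' h x₂ :=
          fun h hh => hx₂ h (Finset.mem_of_mem_erase hh)
        obtain ⟨z, hzℓ0, hzsig, t, ht0, ht1, hz⟩ :=
          crossing L' ℓ x₁ x₂ (fun h hh => OKs_samesign (hOK₁ h hh) (hOK₂ h hh))
            (by nlinarith)
        refine mem_realizedOn.mpr ⟨hsub', z, (mem_iff_phi hℓ).mpr hzℓ0, fun h hh => ?_⟩
        exact OKs_of_samesign (hOK₁ h hh) (hzsig h hh)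
      -- at least one
      have hone : S' ∈ cham L ∨ insert ℓ S' ∈ cham L := by
        have hx'ℓ : phi ℓ x' ≠ 0 := by
          intro hc
          apply hreal
          exact mem_realizedOn.mpr ⟨hsub', x', (mem_iff_phi hℓ).mpr hc, hx'⟩
        rcases lt_or_gt_of_ne hx'ℓ with hneg | hpos
        · left
          refine mem_cham.mpr ⟨hsub'.trans (by rw [hins]; exact Finset.subset_insert _ _),
            x', fun h hh => ?_⟩
          rw [hins] at hh
          rcases Finset.mem_insert.mp hh with rfl | hh
          · unfold OKs
            rw [if_neg hℓ_not_S']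
            exact hneg
          · exact hx' h hh
        · right
          refine mem_cham.mpr ⟨by rw [hins]; exact Finset.insert_subset_insert _ hsub',
            x', fun h hh => ?_⟩
          rw [hins] at hh
          rcases Finset.mem_insert.mp hh with rfl | hh
          · unfold OKs
            rw [if_pos (Finset.mem_insert_self h S')]
            exact hpos
          · have hne : h ≠ ℓ := fun c => hℓnot (c ▸ hh)
            exact (OKs_congr (by simp [Finset.mem_insert, hne])).mp (hx' h hh)
      rcases hone with hone | hone
      · rw [if_pos hone, if_neg (fun c => hnotboth ⟨hone, c⟩)]
      · rw [if_pos hone, if_neg (fun c => hnotboth ⟨c, hone⟩)]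
  rw [Finset.sum_congr rfl hfib, Finset.sum_add_distrib]
  have h1 : ∑ S' ∈ cham L', (1:ℕ) = (cham L').card := by
    rw [Finset.card_eq_sum_ones]
  have h2 : ∑ S' ∈ cham L', (if S' ∈ realizedOn ℓ L' then 1 else 0)
      = (realizedOn ℓ L').card := by
    rw [← Finset.card_filter]
    apply Finset.card_nbij (fun S => S) (fun S hS => (Finset.mem_filter.mp hS).2)
    · intro a _ b _ h; exact h
    · intro S hS
      exact ⟨S, Finset.mem_filter.mpr ⟨realizedOn_subset_cham hS, hS⟩, rfl⟩
  rw [h1, h2]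

/-! ### Vertex bookkeeping -/

lemma multF_erase {L : Finset (Submodule ℝ V3)} {ℓ : Submodule ℝ V3} (hℓL : ℓ ∈ L) (p) :
    multF L p = multF (L.erase ℓ) p + (if p ≤ ℓ then 1 else 0) := by
  classical
  unfold multF
  conv_lhs => rw [← Finset.insert_erase hℓL]
  rw [Finset.filter_insert]
  by_cases hp : p ≤ ℓ
  · rw [if_pos hp, if_pos hp, Finset.card_insert_of_notMem
      (fun c => Finset.notMem_erase ℓ L (Finset.mem_of_mem_filter _ c))]
  · rw [if_neg hp, if_neg hp, add_zero]

lemma vertex_step {L : Finset (Submodule ℝ V3)} (hL : ∀ g ∈ L, IsProjLine g)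
    {ℓ : Submodule ℝ V3} (hℓL : ℓ ∈ L) :
    EE L + VV (L.erase ℓ)
      = EE (L.erase ℓ) + VV L + ((L.erase ℓ).image (fun g => ℓ ⊓ g)).card := by
  classical
  set L' := L.erase ℓ with hL'def
  have hL' : ∀ g ∈ L', IsProjLine g := fun g hg => hL g (Finset.mem_of_mem_erase hg)
  have hsub : vx L' ⊆ vx L := by
    intro p hp
    obtain ⟨hp1, hp2⟩ := (mem_vx_iff hL').mp hp
    refine (mem_vx_iff hL).mpr ⟨hp1, le_trans hp2 ?_⟩
    unfold multF
    exact Finset.card_le_card (Finset.filter_subset_filter _ (Finset.erase_subset _ _))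
  have hnew : ∀ p ∈ vx L \ vx L', p ≤ ℓ ∧ multF L p = 2 ∧ multF L' p = 1 := by
    intro p hp
    obtain ⟨hpL, hpL'⟩ := Finset.mem_sdiff.mp hp
    obtain ⟨hp1, hp2⟩ := (mem_vx_iff hL).mp hpL
    have hp3 : multF L' p ≤ 1 := by
      by_contra hc
      exact hpL' ((mem_vx_iff hL').mpr ⟨hp1, by omega⟩)
    have hme := multF_erase hℓL p
    rw [← hL'def] at hme
    by_cases hpℓ : p ≤ ℓ
    · rw [if_pos hpℓ] at hme
      exact ⟨hpℓ, by omega, by omega⟩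
    · rw [if_neg hpℓ, add_zero] at hme
      omega
  -- k = b + a
  have hk : ((L'.image (fun g => ℓ ⊓ g))).card
      = ((vx L').filter (fun p => p ≤ ℓ)).card + (vx L \ vx L').card := by
    rw [← vx_on_line hL hℓL]
    have hsplit : (vx L).filter (fun p => p ≤ ℓ)
        = (vx L').filter (fun p => p ≤ ℓ) ∪ (vx L \ vx L') := by
      ext p
      simp only [Finset.mem_filter, Finset.mem_union, Finset.mem_sdiff]
      constructor
      · rintro ⟨hpL, hpℓ⟩
        by_cases hpL' : p ∈ vx L'
        · exact Or.inl ⟨hpL', hpℓ⟩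
        · exact Or.inr ⟨hpL, hpL'⟩
      · rintro (⟨hpL', hpℓ⟩ | ⟨hp1, hp2⟩)
        · exact ⟨hsub hpL', hpℓ⟩
        · exact ⟨hp1, (hnew p (Finset.mem_sdiff.mpr ⟨hp1, hp2⟩)).1⟩
    rw [hsplit, Finset.card_union_of_disjoint]
    rw [Finset.disjoint_left]
    intro p hp hp2
    exact (Finset.mem_sdiff.mp hp2).2 ((Finset.mem_filter.mp hp).1)
  -- VV L = VV L' + a
  have hVV : VV L = VV L' + (vx L \ vx L').card := by
    unfold VV
    rw [← Finset.card_sdiff_add_card_eq_card hsub]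
    omega
  -- EE L = EE L' + b + 2a
  have hEE : EE L = EE L' + ((vx L').filter (fun p => p ≤ ℓ)).card
      + 2 * (vx L \ vx L').card := by
    unfold EE
    rw [← Finset.sum_sdiff hsub]
    have hA : ∑ p ∈ vx L \ vx L', multF L p = 2 * (vx L \ vx L').card := by
      rw [Finset.sum_congr rfl (fun p hp => (hnew p hp).2.1)]
      simp [mul_comm]
    have hB : ∑ p ∈ vx L', multF L p
        = (∑ p ∈ vx L', multF L' p) + ((vx L').filter (fun p => p ≤ ℓ)).card := by
      rw [Finset.sum_congr rfl (fun p (hp : p ∈ vx L') => multF_erase hℓL p),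
        Finset.sum_add_distrib, Finset.card_filter]
    rw [hA, hB]
    ring
  omega

/-! ### Euler relation -/

lemma cham_singleton {a : Submodule ℝ V3} (ha : IsProjLine a) :
    cham {a} = {∅, {a}} := by
  ext S
  rw [mem_cham]
  constructor
  · rintro ⟨hsub, -⟩
    rcases Finset.subset_singleton_iff.mp hsub with rfl | rfl <;> simp
  · intro hS
    obtain ⟨v, hv⟩ := exists_phi_pos ha
    rcases Finset.mem_insert.mp hS with rfl | hS
    · refine ⟨Finset.empty_subset _, -v, fun h hh => ?_⟩
      rw [Finset.mem_singleton.mp hh]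
      unfold OKs
      rw [if_neg (Finset.notMem_empty _), map_neg]
      linarith
    · rw [Finset.mem_singleton.mp hS]
      refine ⟨le_refl _, v, fun h hh => ?_⟩
      rw [Finset.mem_singleton.mp hh]
      unfold OKs
      rw [if_pos (Finset.mem_singleton_self _)]
      exact hv

lemma euler : ∀ (n : ℕ) (L : Finset (Submodule ℝ V3)), L.card = n →
    (∀ ℓ ∈ L, IsProjLine ℓ) → L.Nonempty →
    (cham L).card + 2 * VV L = 2 + 2 * EE L := by
  intro n
  induction n with
  | zero =>
    intro L hc _ hne
    rw [Finset.card_eq_zero] at hc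
    subst hc
    exact absurd hne (by simp)
  | succ n ih =>
    intro L hc hL hne
    rcases Nat.eq_zero_or_pos n with rfl | hn
    · -- single line
      obtain ⟨a, rfl⟩ := Finset.card_eq_one.mp hc
      have ha : IsProjLine a := hL a (Finset.mem_singleton_self a)
      rw [cham_singleton ha]
      have hvx : vx {a} = ∅ := by
        unfold vx
        rw [Finset.offDiag_singleton, Finset.image_empty]
      have hEE : EE {a} = 0 := by
        unfold EE
        rw [hvx, Finset.sum_empty]
      unfold VV
      rw [hvx, hEE, Finset.card_insert_of_notMem
        (by simpa using (Finset.singleton_ne_empty a).symm), Finset.card_singleton]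
      simp
    · obtain ⟨ℓ, hℓL⟩ := hne
      set L' := L.erase ℓ with hL'def
      have hcard' : L'.card = n := by
        rw [hL'def, Finset.card_erase_of_mem hℓL, hc]
        omega
      have hne' : L'.Nonempty := by
        rw [← Finset.card_pos, hcard']; exact hn
      have hL' : ∀ g ∈ L', IsProjLine g := fun g hg => hL g (Finset.mem_of_mem_erase hg)
      have hL'ne : ∀ g ∈ L', g ≠ ℓ := fun g hg => Finset.ne_of_mem_erase hg
      have h1 := cham_step hℓL (hL ℓ hℓL) hL
      have h2 := realizedOn_card (hL ℓ hℓL) L' hne' hL' hL'ne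
      have h3 := vertex_step hL hℓL
      have h4 := ih L' hcard' hL' hne'
      rw [← hL'def] at h1 h3
      omega

/-! ### Wall counting -/

lemma wall_fiber_card {L : Finset (Submodule ℝ V3)} {g : Submodule ℝ V3}
    (hg : g ∈ L) (hgline : IsProjLine g) :
    ((cham L).filter (fun S => wallp L S g)).card
      = 2 * (realizedOn g (L.erase g)).card := by
  classical
  set L' := L.erase g with hL'def
  have hgnot : g ∉ L' := Finset.notMem_erase _ _
  rw [Finset.card_eq_sum_card_fiberwise (f := fun S => S.erase g) (t := realizedOn g L')
    (fun S hS => by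
      obtain ⟨hScham, hSwall⟩ := Finset.mem_filter.mp hS
      obtain ⟨hsub, -⟩ := mem_cham.mp hScham
      obtain ⟨z, hzg, hz⟩ := hSwall
      refine mem_realizedOn.mpr ⟨Finset.erase_subset_erase _ hsub,
        z, (mem_iff_phi hgline).mpr hzg, fun h hh => ?_⟩
      have hne := Finset.ne_of_mem_erase hh
      exact (OKs_congr (by simp [Finset.mem_erase, hne])).mp
        (hz h (Finset.mem_of_mem_erase hh) hne))]
  have hfib : ∀ S' ∈ realizedOn g L',
      (((cham L).filter (fun S => wallp L S g)).filter (fun S => S.erase g = S')).card = 2 := by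
    intro S' hS'
    obtain ⟨hsub', z, hzg, hz⟩ := mem_realizedOn.mp hS'
    have hg_not_S' : g ∉ S' := fun c => hgnot (hsub' c)
    have hzgv : phi g z = 0 := (mem_iff_phi hgline).mp hzg
    have hzne : ∀ h ∈ L', phi h z ≠ 0 := fun h hh => OKs_ne_zero (hz h hh)
    have hLins : L = insert g L' := by rw [hL'def, Finset.insert_erase hg]
    -- both extensions are chambers with wall g
    have hmember : ∀ (S'' : Finset (Submodule ℝ V3)), S'' = S' ∨ S'' = insert g S' →
        S'' ∈ (cham L).filter (fun S => wallp L S g) := by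
      intro S'' hS''
      have hmem_iff : ∀ h, h ≠ g → (h ∈ S'' ↔ h ∈ S') := by
        intro h hne
        rcases hS'' with rfl | rfl
        · exact Iff.rfl
        · simp [Finset.mem_insert, hne]
      have hOKS'' : ∀ h ∈ L, h ≠ g → OKs S'' h z := by
        intro h hh hne
        have hh' : h ∈ L' := Finset.mem_erase.mpr ⟨hne, hh⟩
        exact (OKs_congr (hmem_iff h hne).symm).mp (hz h hh')
      have hwall : wallp L S'' g := ⟨z, hzgv, hOKS''⟩
      -- find a chamber point
      obtain ⟨v, hv⟩ := exists_phi_pos hgline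
      obtain ⟨w, hwsign⟩ : ∃ w : V3, (g ∈ S'' → 0 < phi g w) ∧ (g ∉ S'' → phi g w < 0) := by
        by_cases hgS : g ∈ S''
        · exact ⟨v, fun _ => hv, fun c => absurd hgS c⟩
        · exact ⟨-v, fun c => absurd c hgS, fun _ => by rw [map_neg]; linarith⟩
      obtain ⟨δ, hδ, hδ'⟩ := perturb L' z w hzne
      set y := z + δ • w with hy
      have hyOK : ∀ h ∈ L, OKs S'' h y := by
        intro h hh
        by_cases hne : h = g
        · subst hne
          have hygval : phi h y = δ * phi h w := by
            rw [hy, map_add, map_smul, smul_eq_mul, hzgv, zero_add]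
          unfold OKs
          by_cases hgS : h ∈ S''
          · rw [if_pos hgS, hygval]
            exact mul_pos hδ (hwsign.1 hgS)
          · rw [if_neg hgS, hygval]
            exact mul_neg_of_pos_of_neg hδ (hwsign.2 hgS)
        · have hh' : h ∈ L' := Finset.mem_erase.mpr ⟨hne, hh⟩
          exact OKs_of_samesign (hOKS'' h hh hne) (hδ' δ hδ le_rfl h hh')
      have hsub'' : S'' ⊆ L := by
        rcases hS'' with rfl | rfl
        · exact hsub'.trans (Finset.erase_subset _ _)
        · rw [hLins]
          exact Finset.insert_subset_insert _ hsub'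
      exact Finset.mem_filter.mpr ⟨mem_cham.mpr ⟨hsub'', y, hyOK⟩, hwall⟩
    have hpair : ((cham L).filter (fun S => wallp L S g)).filter (fun S => S.erase g = S')
        = ({S', insert g S'} : Finset _) := by
      ext T
      simp only [Finset.mem_filter, Finset.mem_insert, Finset.mem_singleton]
      constructor
      · rintro ⟨-, hTe⟩
        exact erase_fiber hTe
      · intro hT
        refine ⟨Finset.mem_filter.mp (hmember T hT), ?_⟩
        rcases hT with rfl | rfl
        · exact Finset.erase_eq_of_notMem hg_not_S'
        · exact Finset.erase_insert hg_not_S'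
    rw [hpair, Finset.card_insert_of_notMem (by
      intro hc
      exact hg_not_S' ((Finset.mem_singleton.mp hc) ▸ Finset.mem_insert_self g S')),
      Finset.card_singleton]
  rw [Finset.sum_congr rfl hfib]
  rw [Finset.sum_const, smul_eq_mul, mul_comm]

lemma walls_sum {L : Finset (Submodule ℝ V3)} (hL : ∀ g ∈ L, IsProjLine g)
    (hd : 2 ≤ L.card) :
    ∑ S ∈ cham L, (L.filter (fun g => wallp L S g)).card = 4 * EE L := by
  classical
  have hswap : ∑ S ∈ cham L, (L.filter (fun g => wallp L S g)).card
      = ∑ g ∈ L, ((cham L).filter (fun S => wallp L S g)).card := by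
    simp only [Finset.card_filter]
    exact Finset.sum_comm
  rw [hswap]
  have hper : ∀ g ∈ L, ((cham L).filter (fun S => wallp L S g)).card
      = 4 * ((vx L).filter (fun p => p ≤ g)).card := by
    intro g hg
    have hgline := hL g hg
    have herase_ne : (L.erase g).Nonempty := by
      rw [← Finset.card_pos, Finset.card_erase_of_mem hg]
      omega
    have h1 := wall_fiber_card hg hgline
    have h2 := realizedOn_card hgline (L.erase g) herase_ne
      (fun h hh => hL h (Finset.mem_of_mem_erase hh))
      (fun h hh => Finset.ne_of_mem_erase hh)
    have h3 := vx_on_line hL hg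
    rw [h1, h2, ← h3]
    ring
  rw [Finset.sum_congr rfl hper, ← Finset.mul_sum, EE_eq_sum_lines hL]

/-! ### Every chamber has at least three walls -/

lemma exists_nonzero_of_rank_pos {p : Submodule ℝ V3} (hp : 0 < Module.finrank ℝ p) :
    ∃ z ∈ p, z ≠ (0 : V3) := by
  by_contra h
  push_neg at h
  have hbot : p = ⊥ := by
    rw [Submodule.eq_bot_iff]
    exact fun z hz => h z hz
  rw [hbot, finrank_bot] at hp
  omega

lemma finrank_le_three (p : Submodule ℝ V3) : Module.finrank ℝ p ≤ 3 := by
  have := Submodule.finrank_le p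
  rwa [finrank_V3] at this

lemma submodule_ne_top_of_finrank_lt {p : Submodule ℝ V3} (hp : Module.finrank ℝ p < 3) :
    p ≠ ⊤ := by
  intro h
  rw [h, finrank_top, finrank_V3] at hp
  omega

lemma finrank_sup_le (p q : Submodule ℝ V3) :
    Module.finrank ℝ ↥(p ⊔ q) ≤ Module.finrank ℝ p + Module.finrank ℝ q := by
  have := Submodule.finrank_sup_add_finrank_inf_eq p q
  omega

lemma walls_ge_three {L : Finset (Submodule ℝ V3)} (hL : ∀ g ∈ L, IsProjLine g)
    (hLne : L.Nonempty)
    (hess : ∀ v : V3, v ≠ 0 → ∃ ℓ ∈ L, phi ℓ v ≠ 0) :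
    ∀ S ∈ cham L, 3 ≤ (L.filter (fun g => wallp L S g)).card := by
  classical
  intro S hS
  by_contra hcon
  push_neg at hcon
  set W := L.filter (fun g => wallp L S g) with hW
  obtain ⟨hsub, x, hx⟩ := mem_cham.mp hS
  -- find common direction of the walls
  obtain ⟨v, hv0, hvW⟩ : ∃ v : V3, v ≠ 0 ∧ ∀ g ∈ W, v ∈ g := by
    have hcard : W.card = 0 ∨ W.card = 1 ∨ W.card = 2 := by omega
    rcases hcard with hc | hc | hc
    · refine ⟨fun _ => 1, ?_, ?_⟩
      · intro h
        have := congrFun h 0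
        simp at this
      · intro g hg
        rw [Finset.card_eq_zero] at hc
        rw [hc] at hg
        exact absurd hg (Finset.notMem_empty g)
    · obtain ⟨g, hgW⟩ := Finset.card_eq_one.mp hc
      have hgL : g ∈ L := Finset.mem_of_mem_filter g (hgW ▸ Finset.mem_singleton_self g)
      have hgline : IsProjLine g := hL g hgL
      obtain ⟨z, hz, hz0⟩ := exists_nonzero_of_rank_pos
        (by rw [show Module.finrank ℝ g = 2 from hgline]; omega)
      refine ⟨z, hz0, fun h hh => ?_⟩
      rw [hgW, Finset.mem_singleton] at hh
      rwa [hh]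
    · obtain ⟨g₁, g₂, hne, hgW⟩ := Finset.card_eq_two.mp hc
      have hg₁L : g₁ ∈ L := Finset.mem_of_mem_filter g₁
        (hgW ▸ Finset.mem_insert_self g₁ {g₂})
      have hg₂L : g₂ ∈ L := Finset.mem_of_mem_filter g₂
        (hgW ▸ Finset.mem_insert_of_mem (Finset.mem_singleton_self g₂))
      have h1 : Module.finrank ℝ g₁ = 2 := hL g₁ hg₁L
      have h2 : Module.finrank ℝ g₂ = 2 := hL g₂ hg₂L
      have hinf : 0 < Module.finrank ℝ ↥(g₁ ⊓ g₂) := by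
        have hs := Submodule.finrank_sup_add_finrank_inf_eq g₁ g₂
        have hle := finrank_le_three (g₁ ⊔ g₂)
        omega
      obtain ⟨z, hz, hz0⟩ := exists_nonzero_of_rank_pos hinf
      refine ⟨z, hz0, fun h hh => ?_⟩
      rw [hgW] at hh
      rcases Finset.mem_insert.mp hh with rfl | hh
      · exact (Submodule.mem_inf.mp hz).1
      · rw [Finset.mem_singleton.mp hh]
        exact (Submodule.mem_inf.mp hz).2
  obtain ⟨ℓ₀, hℓ₀L, hℓ₀v⟩ := hess v hv0
  have hℓ₀ : IsProjLine ℓ₀ := hL ℓ₀ hℓ₀L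
  have hℓ₀x : phi ℓ₀ x ≠ 0 := OKs_ne_zero (hx ℓ₀ hℓ₀L)
  -- the point on the other side
  set t₀ : ℝ := -2 * phi ℓ₀ x / phi ℓ₀ v with ht₀
  set y₀ : V3 := x + t₀ • v with hy₀
  have hy₀val : phi ℓ₀ y₀ = - phi ℓ₀ x := by
    rw [hy₀, map_add, map_smul, smul_eq_mul, ht₀]
    field_simp
    ring
  set U : Set V3 := {y | (∀ g ∈ W, 0 < phi g y * phi g x) ∧ phi ℓ₀ y * phi ℓ₀ x < 0}
    with hU
  have hUopen : IsOpen U := by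
    have h1 : U = (⋂ g ∈ (W : Set (Submodule ℝ V3)), {y | 0 < phi g y * phi g x})
        ∩ {y | phi ℓ₀ y * phi ℓ₀ x < 0} := by
      ext y
      simp [hU, Set.mem_iInter]
    rw [h1]
    apply IsOpen.inter
    · apply Set.Finite.isOpen_biInter (Finset.finite_toSet W)
      intro g _
      exact isOpen_lt continuous_const
        (((phi g).continuous_of_finiteDimensional).mul continuous_const)
    · exact isOpen_lt (((phi ℓ₀).continuous_of_finiteDimensional).mul continuous_const)
        continuous_const
  have hy₀U : y₀ ∈ U := by
    constructor
    · intro g hgW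
      have hgv : phi g v = 0 := (mem_iff_phi (hL g (Finset.mem_of_mem_filter g hgW))).mp
        (hvW g hgW)
      have : phi g y₀ = phi g x := by
        rw [hy₀, map_add, map_smul, smul_eq_mul, hgv, mul_zero, add_zero]
      rw [this]
      exact mul_self_pos.mpr (OKs_ne_zero (hx g (Finset.mem_of_mem_filter g hgW)))
    · rw [hy₀val]
      nlinarith [mul_self_pos.mpr hℓ₀x]
  -- avoid the planes and the degenerate 2-subspaces
  set T : Finset (Submodule ℝ V3) :=
    L ∪ (vx L).image (fun p => p ⊔ Submodule.span ℝ {x}) with hT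
  have hTprop : ∀ p ∈ T, p ≠ ⊤ := by
    intro p hp
    rcases Finset.mem_union.mp hp with hp | hp
    · exact submodule_ne_top_of_finrank_lt (by rw [show Module.finrank ℝ p = 2 from hL p hp]; omega)
    · obtain ⟨q, hq, rfl⟩ := Finset.mem_image.mp hp
      apply submodule_ne_top_of_finrank_lt
      have hq1 : Module.finrank ℝ q = 1 := vx_isProjPoint hL hq
      have hsp : Module.finrank ℝ ↥(Submodule.span ℝ {x}) ≤ 1 := by
        by_cases hx0 : x = 0
        · rw [hx0, Submodule.span_zero_singleton, finrank_bot]; omega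
        · rw [finrank_span_singleton hx0]
      have := finrank_sup_le q (Submodule.span ℝ {x})
      omega
  obtain ⟨y, hyU, hyT⟩ := avoid U hUopen ⟨y₀, hy₀U⟩ T hTprop
  -- now apply walls_cut
  have hy0 : ∀ h ∈ L, phi h y ≠ 0 := by
    intro h hh hc
    exact hyT h (Finset.mem_union_left _ hh) ((mem_iff_phi (hL h hh)).mpr hc)
  have hseg : ∀ g ∈ L, ∀ h ∈ L, g ≠ h →
      ∀ t : ℝ, ¬(phi g (x + t • (y - x)) = 0 ∧ phi h (x + t • (y - x)) = 0) := by
    rintro g hg h hh hgh t ⟨hg0, hh0⟩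
    set z := x + t • (y - x) with hz
    have hzp : z ∈ g ⊓ h := Submodule.mem_inf.mpr
      ⟨(mem_iff_phi (hL g hg)).mpr hg0, (mem_iff_phi (hL h hh)).mpr hh0⟩
    have hpvx : g ⊓ h ∈ vx L :=
      Finset.mem_image.mpr ⟨(g, h), Finset.mem_offDiag.mpr ⟨hg, hh, hgh⟩, rfl⟩
    have ht0 : t ≠ 0 := by
      rintro rfl
      rw [zero_smul, add_zero] at hz
      rw [hz] at hg0
      exact OKs_ne_zero (hx g hg) hg0
    have hymem : y ∈ (g ⊓ h) ⊔ Submodule.span ℝ {x} := by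
      have hzmem : z ∈ (g ⊓ h) ⊔ Submodule.span ℝ {x} :=
        Submodule.mem_sup_left hzp
      have hxmem : x ∈ (g ⊓ h) ⊔ Submodule.span ℝ {x} :=
        Submodule.mem_sup_right (Submodule.mem_span_singleton_self x)
      have hyeq : y = x + t⁻¹ • (z - x) := by
        rw [hz, add_sub_cancel_left, smul_smul, inv_mul_cancel₀ ht0, one_smul]
        abel
      rw [hyeq]
      exact Submodule.add_mem _ hxmem
        (Submodule.smul_mem _ _ (Submodule.sub_mem _ hzmem hxmem))
    exact hyT _ (Finset.mem_union_right _
      (Finset.mem_image.mpr ⟨g ⊓ h, hpvx, rfl⟩)) hymem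
  have hwall : ∀ g ∈ L, wallp L S g → OKs S g y := by
    intro g hg hw
    have hgW : g ∈ W := Finset.mem_filter.mpr ⟨hg, hw⟩
    exact OKs_of_samesign (hx g hg) (hyU.1 g hgW)
  have hfinal := walls_cut hx hy0 hseg hwall ℓ₀ hℓ₀L
  have := OKs_samesign (hx ℓ₀ hℓ₀L) hfinal
  have h2 := hyU.2
  nlinarith

/-! ### Relating `tr` to the vertex counts -/

lemma multPt_eq_multF (L : Finset (Submodule ℝ V3)) (p : Submodule ℝ V3) :
    multPt L p = multF L p := by
  unfold multPt multF
  rw [← Set.ncard_coe_finset]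
  congr 1
  ext ℓ
  simp [Finset.mem_filter]

lemma tr'_eq {L : Finset (Submodule ℝ V3)} (hL : ∀ g ∈ L, IsProjLine g) {r : ℕ} (hr : 2 ≤ r) :
    {p : Submodule ℝ V3 | IsProjPoint p ∧ multPt L p = r}.ncard
      = ((vx L).filter (fun p => multF L p = r)).card := by
  rw [← Set.ncard_coe_finset]
  congr 1
  ext p
  simp only [Set.mem_setOf_eq, Finset.coe_filter, Finset.mem_filter]
  constructor
  · rintro ⟨hpp, hmult⟩
    rw [multPt_eq_multF] at hmult
    exact ⟨(mem_vx_iff hL).mpr ⟨hpp, by omega⟩, hmult⟩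
  · rintro ⟨hpv, hmult⟩
    exact ⟨((mem_vx_iff hL).mp hpv).1, by rw [multPt_eq_multF]; exact hmult⟩

lemma multF_le_card (L : Finset (Submodule ℝ V3)) (p : Submodule ℝ V3) :
    multF L p ≤ L.card :=
  Finset.card_le_card (Finset.filter_subset _ _)

lemma VV_eq_sum {L : Finset (Submodule ℝ V3)} (hL : ∀ g ∈ L, IsProjLine g) :
    VV L = ∑ r ∈ Finset.Icc 2 L.card, ((vx L).filter (fun p => multF L p = r)).card := by
  unfold VV
  apply Finset.card_eq_sum_card_fiberwise (f := fun p => multF L p)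
  intro p hp
  rw [Finset.mem_coe, Finset.mem_Icc]
  exact ⟨((mem_vx_iff hL).mp hp).2, multF_le_card L p⟩

lemma EE_eq_sum {L : Finset (Submodule ℝ V3)} (hL : ∀ g ∈ L, IsProjLine g) :
    EE L = ∑ r ∈ Finset.Icc 2 L.card,
      r * ((vx L).filter (fun p => multF L p = r)).card := by
  unfold EE
  rw [← Finset.sum_fiberwise_of_maps_to (g := fun p => multF L p) (t := Finset.Icc 2 L.card)
    (fun p hp => Finset.mem_Icc.mpr ⟨((mem_vx_iff hL).mp hp).2, multF_le_card L p⟩)]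
  apply Finset.sum_congr rfl
  intro r _
  rw [Finset.sum_congr rfl (fun p hp => (Finset.mem_filter.mp hp).2), Finset.sum_const,
    smul_eq_mul, mul_comm]

/-! ### Main theorem (scratch version with unprimed defs to be ported) -/

theorem melchior_aux (L : Finset (Submodule ℝ V3)) (d : ℕ)
    (hL : ∀ ℓ ∈ L, IsProjLine ℓ) (hcard : L.card = d) (hd : 3 ≤ d)
    (htd : {p : Submodule ℝ V3 | IsProjPoint p ∧ multPt L p = d}.ncard = 0) :
    {p : Submodule ℝ V3 | IsProjPoint p ∧ multPt L p = 2}.ncard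
      ≥ 3 + ∑ r ∈ Finset.Icc 4 (d - 1),
        (r - 3) * {p : Submodule ℝ V3 | IsProjPoint p ∧ multPt L p = r}.ncard := by
  classical
  subst hcard
  have hLne : L.Nonempty := by
    rw [← Finset.card_pos]; omega
  -- essentiality
  have hess : ∀ v : V3, v ≠ 0 → ∃ ℓ ∈ L, phi ℓ v ≠ 0 := by
    by_contra hcon
    push_neg at hcon
    obtain ⟨v, hv0, hall⟩ := hcon
    set p := Submodule.span ℝ {v} with hp
    have hp1 : Module.finrank ℝ p = 1 := finrank_span_singleton hv0
    have hpmult : multF L p = L.card := by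
      unfold multF
      rw [Finset.filter_true_of_mem]
      intro ℓ hℓ
      rw [hp, Submodule.span_le, Set.singleton_subset_iff]
      exact (mem_iff_phi (hL ℓ hℓ)).mpr (hall ℓ hℓ)
    rw [tr'_eq hL (by omega)] at htd
    rw [Finset.card_eq_zero] at htd
    have hpvx : p ∈ vx L := (mem_vx_iff hL).mpr ⟨hp1, by omega⟩
    have : p ∈ (vx L).filter (fun p => multF L p = L.card) :=
      Finset.mem_filter.mpr ⟨hpvx, hpmult⟩
    rw [htd] at this
    exact Finset.notMem_empty p this
  -- Euler relation
  have hEuler := euler L.card L rfl hL hLne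
  -- wall counting
  have hwalls := walls_sum hL (by omega)
  have h3w := walls_ge_three hL hLne hess
  have h3F : (cham L).card * 3 ≤ ∑ S ∈ cham L, (L.filter (fun g => wallp L S g)).card := by
    have := Finset.card_nsmul_le_sum (cham L)
      (fun S => (L.filter (fun g => wallp L S g)).card) 3 h3w
    simpa [smul_eq_mul] using this
  rw [hwalls] at h3F
  have hkey : 3 + EE L ≤ 3 * VV L := by omega
  -- sum decompositions
  have hV := VV_eq_sum hL
  have hE := EE_eq_sum hL
  have hset : Finset.Icc 2 L.card = insert 2 (insert 3 (Finset.Icc 4 L.card)) := by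
    ext n
    simp only [Finset.mem_Icc, Finset.mem_insert]
    omega
  have h2ni : (2 : ℕ) ∉ insert 3 (Finset.Icc 4 L.card) := by
    simp only [Finset.mem_insert, Finset.mem_Icc]
    omega
  have h3ni : (3 : ℕ) ∉ Finset.Icc 4 L.card := by
    simp only [Finset.mem_Icc]
    omega
  rw [hset, Finset.sum_insert h2ni, Finset.sum_insert h3ni] at hV
  rw [hset, Finset.sum_insert h2ni, Finset.sum_insert h3ni] at hE
  have hsplit3 : ∑ r ∈ Finset.Icc 4 L.card, r * ((vx L).filter (fun p => multF L p = r)).card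
      = (∑ r ∈ Finset.Icc 4 L.card, (r - 3) * ((vx L).filter (fun p => multF L p = r)).card) + 3 * ∑ r ∈ Finset.Icc 4 L.card, ((vx L).filter (fun p => multF L p = r)).card := by
    rw [Finset.mul_sum, ← Finset.sum_add_distrib]
    apply Finset.sum_congr rfl
    intro r hr
    have hr4 : 4 ≤ r := (Finset.mem_Icc.mp hr).1
    rw [← add_mul, Nat.sub_add_cancel (by omega)]
  have htd' : ((vx L).filter (fun p => multF L p = L.card)).card = 0 := by
    rw [tr'_eq hL (by omega)] at htd
    exact htd
  have hlast : ∑ r ∈ Finset.Icc 4 L.card, (r - 3) * ((vx L).filter (fun p => multF L p = r)).card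
      = ∑ r ∈ Finset.Icc 4 (L.card - 1), (r - 3) * ((vx L).filter (fun p => multF L p = r)).card := by
    by_cases h4 : 4 ≤ L.card
    · have hii : Finset.Icc 4 L.card = insert L.card (Finset.Icc 4 (L.card - 1)) := by
        ext n
        simp only [Finset.mem_Icc, Finset.mem_insert]
        omega
      rw [hii, Finset.sum_insert (by simp only [Finset.mem_Icc]; omega), htd', mul_zero,
        zero_add]
    · have h3 : L.card = 3 := by omega
      rw [h3]
      norm_num
  -- rewrite the goal
  have hgoal2 : {p : Submodule ℝ V3 | IsProjPoint p ∧ multPt L p = 2}.ncard = ((vx L).filter (fun p => multF L p = 2)).card :=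
    tr'_eq hL le_rfl
  have hgoalr : ∑ r ∈ Finset.Icc 4 (L.card - 1),
      (r - 3) * {p : Submodule ℝ V3 | IsProjPoint p ∧ multPt L p = r}.ncard
      = ∑ r ∈ Finset.Icc 4 (L.card - 1), (r - 3) * ((vx L).filter (fun p => multF L p = r)).card := by
    apply Finset.sum_congr rfl
    intro r hr
    have hr4 : 4 ≤ r := (Finset.mem_Icc.mp hr).1
    rw [tr'_eq hL (by omega)]
  rw [ge_iff_le, hgoal2, hgoalr]
  omega

theorem melchior (L : Finset (Submodule ℝ (Fin 3 → ℝ))) (d : ℕ)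
    (hL : ∀ ℓ ∈ L, IsProjLine ℓ) (hcard : L.card = d) (hd : 3 ≤ d)
    (htd : tr L d = 0) :
    tr L 2 ≥ 3 + ∑ r ∈ Finset.Icc 4 (d - 1), (r - 3) * tr L r := by
  unfold tr at htd ⊢
  exact melchior_aux L d hL hcard hd htd
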